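/- arXiv:1710.00567 — 5 statements merged into one kernel-verified Lean document; each statement's English description precedes it below -/
import Mathlib

section
/- Let 𝒢 be an infinite, locally finite rooted tree equipped with edge conductances c(e) = 1 for |e| = 1 and c(e) = Ψ(e)/(1 − ψ(e)) for |e| > 1, coming from weights (w_e, δ_e). For any collection of positive numbers (u_e)_{e∈E} such that Σ_{e : |e|=1} u_e = 1 and inf_{π∈Π} Σ_{e∈π} u_e c(e) > 0, there exists a nonzero flow on 𝒢 from ϱ to infinity whose energy is at most lim_{n→∞} max_{e : |e|=n} Σ_{g≤e} u_g. -/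
open MeasureTheory ENNReal
open scoped Classical

/-- An infinite, locally finite rooted tree, encoded via the parent map.
Every vertex reaches the root by iterating `parent`, the root is its own parent,
every vertex has finitely many children, and the vertex set is infinite. -/
structure RTree where
  V : Type
  root : V
  parent : V → V
  parent_root : parent root = root
  reaches_root : ∀ v : V, ∃ n : ℕ, parent^[n] v = root
  locallyFinite : ∀ v : V, Set.Finite {u : V | parent u = v ∧ u ≠ root}
  infinite : Infinite V

namespace RTree

variable (T : RTree)

/-- Edges are identified with their endpoint `e⁺` farther from the root;
the other endpoint is `e⁻ = parent e⁺`. -/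
abbrev Edge : Type := {v : T.V // v ≠ T.root}

/-- The generation of a vertex: its graph distance from the root. -/
noncomputable def depth (v : T.V) : ℕ := Nat.find (T.reaches_root v)

/-- The generation `|e|` of an edge, i.e. the generation of `e⁺`. -/
noncomputable def egen (e : T.Edge) : ℕ := T.depth e.val

/-- `g ≤ e` : the edge `g` lies on the unique self-avoiding path from the root to `e⁺`. -/
def edgeLE (g e : T.Edge) : Prop := ∃ n : ℕ, T.parent^[n] e.val = g.val

/-- `g < e` : `g ≤ e` and `g ≠ e`. -/
def edgeLT (g e : T.Edge) : Prop := T.edgeLE g e ∧ g ≠ e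

/-- An infinite self-avoiding path started at the root. -/
structure Ray where
  toFun : ℕ → T.V
  zero_eq : toFun 0 = T.root
  parent_eq : ∀ n : ℕ, T.parent (toFun (n + 1)) = toFun n
  ne_root : ∀ n : ℕ, toFun (n + 1) ≠ T.root

/-- The `(n+1)`-st edge crossed by a ray. -/
def Ray.edge {T : RTree} (ξ : T.Ray) (n : ℕ) : T.Edge := ⟨ξ.toFun (n + 1), ξ.ne_root n⟩

/-- A cutset: a set of edges crossed exactly once by every infinite self-avoiding
path started at the root. -/
def IsCutset (π : Set T.Edge) : Prop := ∀ ξ : T.Ray, ∃! n : ℕ, ξ.edge n ∈ π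

/-- The branching-ruin number
`br_r(𝒢) = sup { λ > 0 : inf_{π ∈ Π} Σ_{e ∈ π} |e|^{-λ} > 0 }`, an element of `[0,∞]`. -/
noncomputable def brr : ℝ≥0∞ :=
  sSup {x : ℝ≥0∞ | ∃ lam : ℝ, 0 < lam ∧ x = ENNReal.ofReal lam ∧
    0 < ⨅ (π : Set T.Edge) (_ : T.IsCutset π),
      ∑' e : π, ENNReal.ofReal ((T.egen e.val : ℝ) ^ (-lam))}

/-- The branching number
`br(𝒢) = sup { λ > 0 : inf_{π ∈ Π} Σ_{e ∈ π} λ^{-|e|} > 0 }`, an element of `[0,∞]`. -/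
noncomputable def brNum : ℝ≥0∞ :=
  sSup {x : ℝ≥0∞ | ∃ lam : ℝ, 0 < lam ∧ x = ENNReal.ofReal lam ∧
    0 < ⨅ (π : Set T.Edge) (_ : T.IsCutset π),
      ∑' e : π, ENNReal.ofReal (lam ^ (-(T.egen e.val : ℝ)))}

/-- The edge `e` has been crossed (in either direction) during the first `n` steps
of the discrete path `x`. -/
def crossedBefore (x : ℕ → T.V) (n : ℕ) (e : T.Edge) : Prop :=
  ∃ k, k < n ∧ ((x k = T.parent e.val ∧ x (k + 1) = e.val) ∨
                (x k = e.val ∧ x (k + 1) = T.parent e.val))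

/-- Current weight of edge `e` at time `n` for a walk with history `x`:
the initial weight `w e` if `e` has not yet been crossed, the reinforced weight `d e`
afterwards. -/
noncomputable def currentWeight (w d : T.Edge → ℝ) (x : ℕ → T.V) (n : ℕ) (e : T.Edge) : ℝ :=
  if T.crossedBefore x n e then d e else w e

/-- Transition probability at time `n`, given the history `x` up to time `n`, of jumping to
the vertex `μ`: the current weight of the edge between `x n` and `μ` (zero if there is none)
divided by the total current weight of the edges incident to `x n`. -/
noncomputable def transProb (w d : T.Edge → ℝ) (x : ℕ → T.V) (n : ℕ) (μ : T.V) : ℝ :=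
  (∑' e : {e : T.Edge // (e.val = μ ∧ T.parent e.val = x n) ∨ (e.val = x n ∧ T.parent e.val = μ)},
      T.currentWeight w d x n e.val) /
  (∑' e : {e : T.Edge // e.val = x n ∨ T.parent e.val = x n},
      T.currentWeight w d x n e.val)

/-- `X` (on the probability space `(Ω, P)`) is a generalized once-reinforced random walk
on `T` with initial weights `w` and reinforced weights `d`: it starts at the root and,
conditionally on its history, crosses an incident edge with probability proportional to the
current weight of that edge. -/
def IsGORRW (w d : T.Edge → ℝ) {Ω : Type} [MeasurableSpace Ω]
    (P : Measure Ω) (X : ℕ → Ω → T.V) : Prop :=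
  (∀ (n : ℕ) (v : T.V), MeasurableSet {ω | X n ω = v}) ∧
  P {ω | X 0 ω = T.root} = 1 ∧
  ∀ (n : ℕ) (x : ℕ → T.V) (μ : T.V),
    P ({ω | ∀ k ≤ n, X k ω = x k} ∩ {ω | X (n + 1) ω = μ}) =
      ENNReal.ofReal (T.transProb w d x n μ) * P {ω | ∀ k ≤ n, X k ω = x k}

/-- The walk is recurrent if it almost surely returns to the root. -/
def Recurrent {Ω : Type} [MeasurableSpace Ω] (P : Measure Ω) (X : ℕ → Ω → T.V) : Prop :=
  P {ω | ∃ n : ℕ, 0 < n ∧ X n ω = T.root} = 1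

/-- `ψ(e) = (Σ_{g<e} δ_g⁻¹) / (w_e⁻¹ + Σ_{g<e} δ_g⁻¹)`, with `ψ(e) = 1` when `|e| = 1`. -/
noncomputable def psi (w d : T.Edge → ℝ) (e : T.Edge) : ℝ :=
  if T.egen e = 1 then 1
  else (∑' g : {g : T.Edge // T.edgeLT g e}, (d g.val)⁻¹) /
       ((w e)⁻¹ + ∑' g : {g : T.Edge // T.edgeLT g e}, (d g.val)⁻¹)

/-- `Ψ(e) = Π_{g ≤ e} ψ(g)`. -/
noncomputable def bigPsi (w d : T.Edge → ℝ) (e : T.Edge) : ℝ :=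
  ∏ᶠ (g : T.Edge) (_ : T.edgeLE g e), T.psi w d g

/-- `RT(𝒢,X) = sup { λ > 0 : inf_{π ∈ Π} Σ_{e ∈ π} Ψ(e)^λ > 0 }`, an element of `[0,∞]`. -/
noncomputable def RTnum (w d : T.Edge → ℝ) : ℝ≥0∞ :=
  sSup {x : ℝ≥0∞ | ∃ lam : ℝ, 0 < lam ∧ x = ENNReal.ofReal lam ∧
    0 < ⨅ (π : Set T.Edge) (_ : T.IsCutset π),
      ∑' e : π, ENNReal.ofReal (T.bigPsi w d e.val ^ lam)}

/-- The modified conductances: `c(e) = 1` if `|e| = 1` and `c(e) = Ψ(e)/(1 - ψ(e))` else. -/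
noncomputable def conductance (w d : T.Edge → ℝ) (e : T.Edge) : ℝ :=
  if T.egen e = 1 then 1 else T.bigPsi w d e / (1 - T.psi w d e)

/-- A flow from the root to infinity: a nonnegative function on edges such that the amount
entering each edge equals the total amount leaving through its children edges. -/
def IsFlow (θ : T.Edge → ℝ) : Prop :=
  (∀ e : T.Edge, 0 ≤ θ e) ∧
  ∀ e : T.Edge, θ e = ∑' g : {g : T.Edge // T.parent g.val = e.val}, θ g.val

/-- A unit flow: a flow sending total mass one out of the root. -/
def IsUnitFlow (θ : T.Edge → ℝ) : Prop :=
  T.IsFlow θ ∧ ∑' e : {e : T.Edge // T.egen e = 1}, θ e.val = 1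

/-- The energy `Σ_e θ_e² / c(e)` of a flow `θ` with respect to conductances `c`. -/
noncomputable def energy (c θ : T.Edge → ℝ) : ℝ≥0∞ :=
  ∑' e : T.Edge, ENNReal.ofReal (θ e ^ 2 / c e)


namespace Stmt11Aux

open Classical

variable (T : RTree)

lemma parent_iterate_root (n : ℕ) : T.parent^[n] T.root = T.root := by
  induction n with
  | zero => rfl
  | succ n ih => rw [Function.iterate_succ_apply, T.parent_root, ih]

lemma depth_root : T.depth T.root = 0 := by
  simp [RTree.depth, Nat.find_eq_zero]

lemma iterate_depth_eq_root (v : T.V) : T.parent^[T.depth v] v = T.root :=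
  Nat.find_spec (T.reaches_root v)

lemma depth_eq_zero_iff (v : T.V) : T.depth v = 0 ↔ v = T.root := by
  simp [RTree.depth, Nat.find_eq_zero]

lemma depth_parent (v : T.V) (hv : v ≠ T.root) :
    T.depth v = T.depth (T.parent v) + 1 := by
  have h1 : T.parent^[T.depth (T.parent v) + 1] v = T.root := by
    rw [Function.iterate_succ_apply]; exact iterate_depth_eq_root T _
  have h2 : ∀ m < T.depth (T.parent v) + 1, T.parent^[m] v ≠ T.root := by
    intro m hm
    cases m with
    | zero => simpa using hv
    | succ m =>
      intro hc
      rw [Function.iterate_succ_apply] at hc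
      have hm' : m < T.depth (T.parent v) := by omega
      exact Nat.find_min (T.reaches_root (T.parent v)) hm' hc
  exact (Nat.find_eq_iff _).2 ⟨h1, h2⟩

lemma iterate_eq_root_of_le (v : T.V) (n : ℕ) (h : T.depth v ≤ n) :
    T.parent^[n] v = T.root := by
  have := iterate_depth_eq_root T v
  calc T.parent^[n] v = T.parent^[n - T.depth v] (T.parent^[T.depth v] v) := by
        rw [← Function.iterate_add_apply]; congr 1; omega
    _ = T.root := by rw [this, parent_iterate_root]

lemma depth_iterate (v : T.V) (n : ℕ) (h : n ≤ T.depth v) :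
    T.depth (T.parent^[n] v) = T.depth v - n := by
  induction n generalizing v with
  | zero => simp
  | succ n ih =>
    have hv : v ≠ T.root := by
      intro hc; rw [hc, depth_root] at h; omega
    have hd := depth_parent T v hv
    rw [Function.iterate_succ_apply, ih (T.parent v) (by omega)]
    omega

lemma iterate_ne_root (v : T.V) (n : ℕ) (h : n < T.depth v) :
    T.parent^[n] v ≠ T.root := by
  intro hc
  have := depth_iterate T v n (le_of_lt h)
  rw [hc, depth_root] at this
  omega

lemma egen_pos (e : T.Edge) : 1 ≤ T.egen e := by
  rcases Nat.eq_zero_or_pos (T.egen e) with h | h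
  · exact absurd ((depth_eq_zero_iff T e.val).1 h) e.prop
  · exact h

lemma edgeLE_iff {g e : T.Edge} :
    T.edgeLE g e ↔ T.egen g ≤ T.egen e ∧ T.parent^[T.egen e - T.egen g] e.val = g.val := by
  constructor
  · rintro ⟨n, hn⟩
    have hlt : n < T.depth e.val := by
      by_contra hc
      exact g.prop (hn ▸ iterate_eq_root_of_le T e.val n (by omega))
    have hdg : T.depth g.val = T.depth e.val - n := by
      rw [← hn]; exact depth_iterate T e.val n (le_of_lt hlt)
    have : T.egen e - T.egen g = n := by
      simp only [RTree.egen] at *; omega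
    refine ⟨by simp only [RTree.egen] at *; omega, by rw [this]; exact hn⟩
  · rintro ⟨_, hn⟩; exact ⟨_, hn⟩

lemma edgeLE_refl (e : T.Edge) : T.edgeLE e e := ⟨0, rfl⟩

lemma edgeLE_egen_le {g e : T.Edge} (h : T.edgeLE g e) : T.egen g ≤ T.egen e :=
  ((edgeLE_iff T).1 h).1

lemma edgeLE_eq_of_egen_le {g e : T.Edge} (h : T.edgeLE g e) (h2 : T.egen e ≤ T.egen g) :
    g = e := by
  obtain ⟨h1, h3⟩ := (edgeLE_iff T).1 h
  have : T.egen e - T.egen g = 0 := by omega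
  rw [this] at h3
  exact (Subtype.ext h3).symm

lemma edgeLE_trans {a b c : T.Edge} (h1 : T.edgeLE a b) (h2 : T.edgeLE b c) :
    T.edgeLE a c := by
  obtain ⟨n, hn⟩ := h1
  obtain ⟨m, hm⟩ := h2
  exact ⟨n + m, by rw [Function.iterate_add_apply, hm, hn]⟩

lemma edgeLE_antisymm {a b : T.Edge} (h1 : T.edgeLE a b) (h2 : T.edgeLE b a) : a = b :=
  edgeLE_eq_of_egen_le T h1 (edgeLE_egen_le T h2)

/-- Ancestors at the same generation coincide. -/
lemma edgeLE_unique_gen {g1 g2 e : T.Edge} (h1 : T.edgeLE g1 e) (h2 : T.edgeLE g2 e)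
    (h : T.egen g1 = T.egen g2) : g1 = g2 := by
  obtain ⟨_, hn1⟩ := (edgeLE_iff T).1 h1
  obtain ⟨_, hn2⟩ := (edgeLE_iff T).1 h2
  apply Subtype.ext
  rw [← hn1, ← hn2, h]

end Stmt11Aux
namespace Stmt11Aux

variable (T : RTree)

lemma finite_depth_eq (n : ℕ) : {v : T.V | T.depth v = n}.Finite := by
  induction n with
  | zero =>
    apply Set.Finite.subset (Set.finite_singleton T.root)
    intro v hv
    exact (depth_eq_zero_iff T v).1 hv
  | succ n ih =>
    apply Set.Finite.subset (Set.Finite.biUnion ih (fun u _ => T.locallyFinite u))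
    intro v hv
    simp only [Set.mem_setOf_eq] at hv
    have hv' : v ≠ T.root := by
      intro hc; rw [hc, depth_root T] at hv; exact Nat.succ_ne_zero n hv.symm
    have hd := depth_parent T v hv'
    exact Set.mem_biUnion (show T.parent v ∈ {v : T.V | T.depth v = n} by
      simp only [Set.mem_setOf_eq]; omega) ⟨rfl, hv'⟩

lemma finite_egen_eq (n : ℕ) : {e : T.Edge | T.egen e = n}.Finite := by
  have h := finite_depth_eq T n
  apply Set.Finite.of_finite_image (f := Subtype.val) ?_
    (Subtype.val_injective.injOn)
  apply h.subset
  rintro v ⟨e, he, rfl⟩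
  exact he

/-- Edges of generation `n`, as a Finset. -/
noncomputable def genF (n : ℕ) : Finset T.Edge := (finite_egen_eq T n).toFinset

lemma mem_genF {n : ℕ} {e : T.Edge} : e ∈ genF T n ↔ T.egen e = n := by
  simp [genF]

lemma finite_children (v : T.V) : {g : T.Edge | T.parent g.val = v}.Finite := by
  apply Set.Finite.of_finite_image (f := Subtype.val) ?_
    (Subtype.val_injective.injOn)
  apply (T.locallyFinite v).subset
  rintro x ⟨e, he, rfl⟩
  exact ⟨he, e.prop⟩

/-- The children edges of the endpoint of edge `e`, as a Finset. -/
noncomputable def chF (e : T.Edge) : Finset T.Edge := (finite_children T e.val).toFinset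

lemma mem_chF {e g : T.Edge} : g ∈ chF T e ↔ T.parent g.val = e.val := by
  simp [chF]

lemma egen_child {g e : T.Edge} (h : T.parent g.val = e.val) :
    T.egen g = T.egen e + 1 := by
  have := depth_parent T g.val g.prop
  rw [h] at this
  exact this

lemma finite_path (e : T.Edge) : {g : T.Edge | T.edgeLE g e}.Finite := by
  apply Set.Finite.of_finite_image (f := T.egen)
    ((Set.finite_Iic (T.egen e)).subset ?_)
  · intro g1 hg1 g2 hg2 h
    exact edgeLE_unique_gen T hg1 hg2 h
  · rintro m ⟨g, hg, rfl⟩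
    exact edgeLE_egen_le T hg

/-- The edges on the path from the root to `e⁺`, as a Finset. -/
noncomputable def pathF (e : T.Edge) : Finset T.Edge := (finite_path T e).toFinset

lemma mem_pathF {e g : T.Edge} : g ∈ pathF T e ↔ T.edgeLE g e := by
  simp [pathF]

/-- The parent edge (junk value `e` itself if the parent is the root). -/
noncomputable def pedge (e : T.Edge) : T.Edge :=
  if h : T.parent e.val = T.root then e else ⟨T.parent e.val, h⟩

lemma pedge_spec {e : T.Edge} (h : 2 ≤ T.egen e) :
    (pedge T e).val = T.parent e.val ∧ T.egen (pedge T e) = T.egen e - 1 := by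
  have hne : T.parent e.val ≠ T.root := by
    intro hc
    have := depth_parent T e.val e.prop
    rw [hc, depth_root T] at this
    simp only [RTree.egen] at h
    omega
  have hd := depth_parent T e.val e.prop
  rw [pedge, dif_neg hne]
  exact ⟨rfl, by simp only [RTree.egen]; omega⟩

lemma pedge_edgeLE {e : T.Edge} (h : 2 ≤ T.egen e) : T.edgeLE (pedge T e) e :=
  ⟨1, by rw [Function.iterate_one, (pedge_spec T h).1]⟩

/-- A strict ancestor of `g` is an ancestor of `g`'s parent edge. -/
lemma edgeLT_le_pedge {g' g : T.Edge} (h : T.edgeLT g' g) : T.edgeLE g' (pedge T g) := by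
  obtain ⟨⟨n, hn⟩, hne⟩ := h
  have hn0 : n ≠ 0 := by
    intro hc; rw [hc] at hn; exact hne (Subtype.ext hn).symm
  have h2 : 2 ≤ T.egen g := by
    have h1 := edgeLE_egen_le T (⟨n, hn⟩ : T.edgeLE g' g)
    have := egen_pos T g'
    have := egen_pos T g
    rcases Nat.lt_or_ge (T.egen g) 2 with hlt | hge
    · exfalso
      have hgg : T.egen g' = T.egen g := by omega
      exact hne (edgeLE_unique_gen T ⟨n, hn⟩ (edgeLE_refl T g) hgg)
    · exact hge
  refine ⟨n - 1, ?_⟩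
  rw [(pedge_spec T h2).1, ← Function.iterate_succ_apply]
  have h3 : (n - 1).succ = n := by omega
  rw [h3]; exact hn

/-- Membership of children: an edge `e'` with `e ≤ e'` and `egen e' = egen e + 1`
is a child of `e`. -/
lemma child_of_le_succ {e e' : T.Edge} (h : T.edgeLE e e') (hg : T.egen e' = T.egen e + 1) :
    T.parent e'.val = e.val := by
  obtain ⟨_, hn⟩ := (edgeLE_iff T).1 h
  rw [hg] at hn
  simpa using hn

end Stmt11Aux
namespace Stmt11Aux

open Classical

variable (T : RTree)

lemma filter_genF_self (e : T.Edge) :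
    (genF T (T.egen e)).filter (fun e' => T.edgeLE e e') = {e} := by
  ext g
  simp only [Finset.mem_filter, mem_genF, Finset.mem_singleton]
  constructor
  · rintro ⟨h1, h2⟩
    exact (edgeLE_eq_of_egen_le T h2 (le_of_eq h1)).symm
  · rintro rfl
    exact ⟨rfl, edgeLE_refl T g⟩

lemma chF_pairwise_disjoint (s : Finset T.Edge) :
    (↑s : Set T.Edge).PairwiseDisjoint (chF T) := by
  intro e1 _ e2 _ hne
  simp only [Function.onFun]
  rw [Finset.disjoint_left]
  intro g h1 h2
  rw [mem_chF] at h1 h2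
  exact hne (Subtype.ext (h1 ▸ h2))

lemma genF_succ_filter {e : T.Edge} {m : ℕ} (h : T.egen e ≤ m) :
    (genF T (m + 1)).filter (fun e' => T.edgeLE e e') =
      ((genF T m).filter (fun e' => T.edgeLE e e')).biUnion (chF T) := by
  ext g
  simp only [Finset.mem_filter, mem_genF, Finset.mem_biUnion, mem_chF]
  constructor
  · rintro ⟨h1, h2⟩
    have h2' : 2 ≤ T.egen g := by
      have := egen_pos T e; omega
    have hs := pedge_spec T h2'
    refine ⟨pedge T g, ⟨by omega, ?_⟩, hs.1.symm⟩
    apply edgeLT_le_pedge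
    refine ⟨h2, ?_⟩
    intro hc
    rw [hc] at h
    omega
  · rintro ⟨e'', ⟨h1, h2⟩, h3⟩
    have hgle : T.edgeLE e'' g := ⟨1, by simpa using h3⟩
    exact ⟨by rw [egen_child T h3, h1], edgeLE_trans T h2 hgle⟩

/-- Summing a "flow-like" function over the descendants of `e` at level `m`. -/
lemma level_sum (φ : T.Edge → ℝ) (hφ : ∀ e, φ e = ∑ g ∈ chF T e, φ g) (e : T.Edge) :
    ∀ m, T.egen e ≤ m → φ e = ∑ e' ∈ (genF T m).filter (fun e' => T.edgeLE e e'), φ e' := by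
  intro m
  induction m with
  | zero => intro h; exact absurd h (by have := egen_pos T e; omega)
  | succ m ih =>
    intro h
    rcases eq_or_lt_of_le h with heq | hlt
    · rw [← heq, filter_genF_self, Finset.sum_singleton]
    · have h' : T.egen e ≤ m := by omega
      rw [genF_succ_filter T h',
        Finset.sum_biUnion (chF_pairwise_disjoint T _)]
      rw [ih h']
      exact Finset.sum_congr rfl (fun e'' _ => hφ e'')

/-- The ancestors at a fixed generation `l ≥ 1` of an edge form a singleton. -/
lemma anc_filter {l : ℕ} (hl : 1 ≤ l) (e' : T.Edge) (h2 : l ≤ T.egen e') :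
    ∃ a, T.egen a = l ∧ T.edgeLE a e' ∧ (genF T l).filter (fun g => T.edgeLE g e') = {a} := by
  have hne : T.parent^[T.egen e' - l] e'.val ≠ T.root :=
    iterate_ne_root T e'.val _ (by simp only [RTree.egen] at h2 ⊢; omega)
  set a : T.Edge := ⟨T.parent^[T.egen e' - l] e'.val, hne⟩ with ha
  have hle : T.edgeLE a e' := ⟨_, rfl⟩
  have hgen : T.egen a = l := by
    simp only [RTree.egen, ha]
    rw [depth_iterate T e'.val _ (by simp only [RTree.egen] at h2 ⊢; omega)]
    simp only [RTree.egen] at h2 ⊢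
    omega
  refine ⟨a, hgen, hle, ?_⟩
  ext g
  simp only [Finset.mem_filter, mem_genF, Finset.mem_singleton]
  constructor
  · rintro ⟨h3, h4⟩
    exact edgeLE_unique_gen T h4 hle (by rw [h3, hgen])
  · rintro rfl
    exact ⟨hgen, hle⟩

/-- Partitioning a sum over a set of edges according to their ancestor at generation `l`. -/
lemma sum_ancestor_partition (B : Finset T.Edge) (f : T.Edge → ℝ) {l : ℕ} (hl : 1 ≤ l)
    (hB : ∀ e' ∈ B, l ≤ T.egen e') :
    ∑ e ∈ genF T l, ∑ e' ∈ B.filter (fun e' => T.edgeLE e e'), f e' = ∑ e' ∈ B, f e' := by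
  have : ∀ e ∈ genF T l, ∑ e' ∈ B.filter (fun e' => T.edgeLE e e'), f e'
      = ∑ e' ∈ B, if T.edgeLE e e' then f e' else 0 := by
    intro e _
    rw [Finset.sum_filter]
  rw [Finset.sum_congr rfl this, Finset.sum_comm]
  apply Finset.sum_congr rfl
  intro e' he'
  obtain ⟨a, _, _, hsing⟩ := anc_filter T hl e' (hB e' he')
  calc ∑ e ∈ genF T l, (if T.edgeLE e e' then f e' else 0)
      = ∑ e ∈ (genF T l).filter (fun g => T.edgeLE g e'), f e' := by
        rw [Finset.sum_filter]
    _ = f e' := by rw [hsing, Finset.sum_singleton]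

end Stmt11Aux
namespace Stmt11Aux

open Classical

/-- Total order on ancestors. -/
lemma edgeLE_total (T : RTree) {g1 g2 e : T.Edge} (h1 : T.edgeLE g1 e) (h2 : T.edgeLE g2 e)
    (h : T.egen g1 ≤ T.egen g2) : T.edgeLE g1 g2 := by
  obtain ⟨hle1, hn1⟩ := (edgeLE_iff T).1 h1
  obtain ⟨hle2, hn2⟩ := (edgeLE_iff T).1 h2
  refine (edgeLE_iff T).2 ⟨h, ?_⟩
  rw [← hn2, ← Function.iterate_add_apply, ← hn1]
  congr 1
  omega

variable (T : RTree) (cap : T.Edge → ℝ)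

/-- Truncated maximal flow value: `G k e` is the max flow through `e` when the tree is
cut off `k` levels below `e`. -/
noncomputable def G : ℕ → T.Edge → ℝ
  | 0 => cap
  | (k+1) => fun e => min (cap e) (∑ g ∈ chF T e, G k g)

variable (hcap : ∀ e, 0 < cap e)
include hcap

lemma G_nonneg (k : ℕ) (e : T.Edge) : 0 ≤ G T cap k e := by
  induction k generalizing e with
  | zero => exact (hcap e).le
  | succ k ih => exact le_min (hcap e).le (Finset.sum_nonneg fun g _ => ih g)

omit hcap in
lemma G_le_cap (k : ℕ) (e : T.Edge) : G T cap k e ≤ cap e := by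
  cases k with
  | zero => exact le_refl _
  | succ k => exact min_le_left _ _

omit hcap in
lemma G_succ_le (k : ℕ) (e : T.Edge) : G T cap (k + 1) e ≤ G T cap k e := by
  induction k generalizing e with
  | zero => exact min_le_left _ _
  | succ k ih =>
    exact min_le_min (le_refl _) (Finset.sum_le_sum fun g _ => ih g)

omit hcap in
lemma G_antitone (e : T.Edge) : Antitone (fun k => G T cap k e) :=
  antitone_nat_of_succ_le (fun k => G_succ_le T cap k e)

/-- The maximal flow value through `e`. -/
noncomputable def fv (e : T.Edge) : ℝ := ⨅ k, G T cap k e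

lemma G_bddBelow (e : T.Edge) : BddBelow (Set.range fun k => G T cap k e) :=
  ⟨0, by rintro x ⟨k, rfl⟩; exact G_nonneg T cap hcap k e⟩

lemma tendsto_G (e : T.Edge) :
    Filter.Tendsto (fun k => G T cap k e) Filter.atTop (nhds (fv T cap e)) :=
  tendsto_atTop_ciInf (G_antitone T cap e) (G_bddBelow T cap hcap e)

lemma fv_nonneg (e : T.Edge) : 0 ≤ fv T cap e :=
  le_ciInf (fun k => G_nonneg T cap hcap k e)

lemma fv_le_cap (e : T.Edge) : fv T cap e ≤ cap e := by
  have h := ciInf_le (G_bddBelow T cap hcap e) 0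
  simpa [G, fv] using h

lemma fv_eq_min (e : T.Edge) :
    fv T cap e = min (cap e) (∑ g ∈ chF T e, fv T cap g) := by
  have h1 : Filter.Tendsto (fun k => G T cap (k + 1) e) Filter.atTop (nhds (fv T cap e)) :=
    (tendsto_G T cap hcap e).comp (Filter.tendsto_add_atTop_nat 1)
  have h2 : Filter.Tendsto (fun k => min (cap e) (∑ g ∈ chF T e, G T cap k g))
      Filter.atTop (nhds (min (cap e) (∑ g ∈ chF T e, fv T cap g))) := by
    apply Filter.Tendsto.min tendsto_const_nhds
    exact tendsto_finset_sum _ (fun g _ => tendsto_G T cap hcap g)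
  exact tendsto_nhds_unique h1 h2

lemma fv_le_sum (e : T.Edge) : fv T cap e ≤ ∑ g ∈ chF T e, fv T cap g := by
  rw [fv_eq_min T cap hcap]; exact min_le_right _ _

/-- children sum of maximal flow values. -/
noncomputable def Sv (e : T.Edge) : ℝ := ∑ g ∈ chF T e, fv T cap g

lemma Sv_nonneg (e : T.Edge) : 0 ≤ Sv T cap e :=
  Finset.sum_nonneg fun g _ => fv_nonneg T cap hcap g

/-- Auxiliary recursion for the flow. -/
noncomputable def Theta : ℕ → T.Edge → ℝ
  | 0 => fun _ => 0
  | (k+1) => fun e =>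
      if T.egen e = 1 then fv T cap e
      else (fv T cap e / Sv T cap (pedge T e)) * Theta k (pedge T e)

/-- The flow. -/
noncomputable def theta (e : T.Edge) : ℝ := Theta T cap (T.egen e) e

omit hcap in
lemma theta_gen_one {e : T.Edge} (h : T.egen e = 1) : theta T cap e = fv T cap e := by
  rw [theta, h]
  simp [Theta, h]

omit hcap in
lemma theta_rec {e : T.Edge} (h : 2 ≤ T.egen e) :
    theta T cap e = (fv T cap e / Sv T cap (pedge T e)) * theta T cap (pedge T e) := by
  have h1 : T.egen e = (T.egen e - 1) + 1 := by omega
  rw [theta, h1]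
  simp only [Theta]
  rw [if_neg (by omega : ¬ T.egen e = 1)]
  congr 1
  rw [theta, (pedge_spec T h).2]

omit hcap in
lemma theta_child {g e : T.Edge} (h : g ∈ chF T e) :
    theta T cap g = (fv T cap g / Sv T cap e) * theta T cap e := by
  rw [mem_chF] at h
  have h2 : 2 ≤ T.egen g := by
    rw [egen_child T h]; have := egen_pos T e; omega
  have hpe : pedge T g = e := Subtype.ext (by rw [(pedge_spec T h2).1, h])
  rw [theta_rec T cap h2, hpe]

lemma theta_nonneg (e : T.Edge) : 0 ≤ theta T cap e := by
  have key : ∀ n e, T.egen e ≤ n → 0 ≤ theta T cap e := by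
    intro n
    induction n with
    | zero => intro e h; exact absurd h (by have := egen_pos T e; omega)
    | succ n ih =>
      intro e h
      rcases eq_or_lt_of_le (egen_pos T e) with h1 | h2
      · rw [theta_gen_one T cap h1.symm]; exact fv_nonneg T cap hcap e
      · have h2' : 2 ≤ T.egen e := h2
        rw [theta_rec T cap h2']
        have hpe := (pedge_spec T h2').2
        apply mul_nonneg
        · exact div_nonneg (fv_nonneg T cap hcap e) (Sv_nonneg T cap hcap _)
        · exact ih _ (by omega)
  exact key (T.egen e) e (le_refl _)

lemma theta_le_fv (e : T.Edge) : theta T cap e ≤ fv T cap e := by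
  have key : ∀ n e, T.egen e ≤ n → theta T cap e ≤ fv T cap e := by
    intro n
    induction n with
    | zero => intro e h; exact absurd h (by have := egen_pos T e; omega)
    | succ n ih =>
      intro e h
      rcases eq_or_lt_of_le (egen_pos T e) with h1 | h2
      · rw [theta_gen_one T cap h1.symm]
      · have h2' : 2 ≤ T.egen e := h2
        rw [theta_rec T cap h2']
        have hpe := (pedge_spec T h2').2
        rcases eq_or_lt_of_le (Sv_nonneg T cap hcap (pedge T e)) with hS | hS
        · have hth : theta T cap (pedge T e) ≤ Sv T cap (pedge T e) :=
            le_trans (ih _ (by omega)) (fv_le_sum T cap hcap _)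
          have hth0 : theta T cap (pedge T e) = 0 :=
            le_antisymm (hth.trans hS.ge) (theta_nonneg T cap hcap _)
          rw [hth0, mul_zero]
          exact fv_nonneg T cap hcap e
        · have hth : theta T cap (pedge T e) ≤ Sv T cap (pedge T e) :=
            le_trans (ih _ (by omega)) (fv_le_sum T cap hcap _)
          rw [div_mul_eq_mul_div, mul_div_assoc]
          apply mul_le_of_le_one_right (fv_nonneg T cap hcap e)
          rw [div_le_one hS]
          exact hth
  exact key (T.egen e) e (le_refl _)

lemma theta_flow (e : T.Edge) : theta T cap e = ∑ g ∈ chF T e, theta T cap g := by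
  have hsum : ∑ g ∈ chF T e, theta T cap g
      = (Sv T cap e)⁻¹ * Sv T cap e * theta T cap e := by
    rw [Finset.sum_congr rfl (fun g hg => theta_child T cap hg)]
    rw [← Finset.sum_mul, ← Finset.sum_div, ← Sv]
    rw [div_mul_eq_mul_div, mul_comm, div_eq_inv_mul, mul_assoc]
    ring
  rcases eq_or_lt_of_le (Sv_nonneg T cap hcap e) with hS | hS
  · have h0 : theta T cap e = 0 := by
      have h1 : fv T cap e ≤ 0 := (fv_le_sum T cap hcap e).trans hS.ge
      exact le_antisymm (le_trans (theta_le_fv T cap hcap e) h1) (theta_nonneg T cap hcap e)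
    rw [h0, hsum, h0, mul_zero]
  · rw [hsum, inv_mul_cancel₀ (ne_of_gt hS), one_mul]

end Stmt11Aux
namespace Stmt11Aux

open Classical

variable (T : RTree) (cap : T.Edge → ℝ)

/-- Edges of generation at most `n`. -/
noncomputable def lowF (n : ℕ) : Finset T.Edge := (Finset.range (n+1)).biUnion (genF T)

lemma mem_lowF {n : ℕ} {e : T.Edge} : e ∈ lowF T n ↔ T.egen e ≤ n := by
  simp only [lowF, Finset.mem_biUnion, Finset.mem_range, mem_genF]
  constructor
  · rintro ⟨k, hk, rfl⟩; omega
  · intro h; exact ⟨T.egen e, by omega, rfl⟩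

/-- The truncated flow value at absolute level `n`. -/
noncomputable def Fn (n : ℕ) (e : T.Edge) : ℝ := G T cap (n - T.egen e) e

/-- The selection trigger: `e` achieves its capacity in the level-`n` truncation. -/
def trig (n : ℕ) (e : T.Edge) : Prop :=
  T.egen e = n ∨ cap e ≤ ∑ g ∈ chF T e, Fn T cap n g

/-- The greedy min-cut at level `n`. -/
noncomputable def cutF (n : ℕ) : Finset T.Edge :=
  (lowF T n).filter (fun e => trig T cap n e ∧ ∀ g, T.edgeLT g e → ¬ trig T cap n g)

lemma Fn_child_sum {n : ℕ} {e : T.Edge} (h1 : T.egen e < n) :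
    Fn T cap n e = min (cap e) (∑ g ∈ chF T e, Fn T cap n g) := by
  have hk : n - T.egen e = (n - T.egen e - 1) + 1 := by omega
  rw [Fn, hk]
  show min (cap e) _ = _
  congr 1
  apply Finset.sum_congr rfl
  intro g hg
  rw [mem_chF] at hg
  rw [Fn, egen_child T hg]
  congr 1

lemma trig_Fn {n : ℕ} {e : T.Edge} (he : T.egen e ≤ n) (ht : trig T cap n e) :
    Fn T cap n e = cap e := by
  rcases eq_or_lt_of_le he with h1 | h2
  · rw [Fn, h1, Nat.sub_self]
    rfl
  · rcases ht with h | h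
    · omega
    · rw [Fn_child_sum T cap h2, min_eq_left h]

lemma notrig_Fn {n : ℕ} {e : T.Edge} (he : T.egen e ≤ n) (ht : ¬ trig T cap n e) :
    Fn T cap n e = ∑ g ∈ chF T e, Fn T cap n g ∧ T.egen e < n := by
  rw [trig, not_or, not_le] at ht
  have h2 : T.egen e < n := by omega
  exact ⟨by rw [Fn_child_sum T cap h2, min_eq_right ht.2.le], h2⟩

/-- Key bound: the capacity of the selected cut below `e` is at most the truncated
flow value through `e`. -/
lemma cut_bound (n : ℕ) : ∀ (k : ℕ) (e : T.Edge), T.egen e ≤ n → n - T.egen e ≤ k →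
    (∀ g, T.edgeLT g e → ¬ trig T cap n g) →
    ∑ e' ∈ (cutF T cap n).filter (fun e' => T.edgeLE e e'), cap e' ≤ Fn T cap n e := by
  intro k
  induction k with
  | zero =>
    intro e he hk hpre
    have heq : T.egen e = n := by omega
    have ht : trig T cap n e := Or.inl heq
    have hmem : e ∈ cutF T cap n := by
      rw [cutF, Finset.mem_filter, mem_lowF]
      exact ⟨he, ht, hpre⟩
    have hsing : (cutF T cap n).filter (fun e' => T.edgeLE e e') = {e} := by
      ext e'
      simp only [Finset.mem_filter, Finset.mem_singleton]
      constructor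
      · rintro ⟨h1, h2⟩
        by_contra hne
        have hlt : T.edgeLT e e' := ⟨h2, fun hc => hne hc.symm⟩
        rw [cutF, Finset.mem_filter] at h1
        exact h1.2.2 e hlt ht
      · intro h
        subst h
        exact ⟨hmem, edgeLE_refl T _⟩
    rw [hsing, Finset.sum_singleton, trig_Fn T cap he ht]
  | succ k ih =>
    intro e he hk hpre
    by_cases ht : trig T cap n e
    · have hmem : e ∈ cutF T cap n := by
        rw [cutF, Finset.mem_filter, mem_lowF]
        exact ⟨he, ht, hpre⟩
      have hsing : (cutF T cap n).filter (fun e' => T.edgeLE e e') = {e} := by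
        ext e'
        simp only [Finset.mem_filter, Finset.mem_singleton]
        constructor
        · rintro ⟨h1, h2⟩
          by_contra hne
          have hlt : T.edgeLT e e' := ⟨h2, fun hc => hne hc.symm⟩
          rw [cutF, Finset.mem_filter] at h1
          exact h1.2.2 e hlt ht
        · intro h
          subst h
          exact ⟨hmem, edgeLE_refl T _⟩
      rw [hsing, Finset.sum_singleton, trig_Fn T cap he ht]
    · obtain ⟨hFn, hlt⟩ := notrig_Fn T cap he ht
      have hnotmem : e ∉ cutF T cap n := by
        rw [cutF, Finset.mem_filter]
        rintro ⟨_, h2, _⟩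
        exact ht h2
      have hpart : (cutF T cap n).filter (fun e' => T.edgeLE e e') =
          (chF T e).biUnion (fun g => (cutF T cap n).filter (fun e' => T.edgeLE g e')) := by
        ext e'
        simp only [Finset.mem_filter, Finset.mem_biUnion]
        constructor
        · rintro ⟨h1, h2⟩
          have hne : e ≠ e' := fun hc => hnotmem (hc ▸ h1)
          have hgen : T.egen e < T.egen e' := by
            rcases lt_or_ge (T.egen e) (T.egen e') with h | h
            · exact h
            · exact absurd (edgeLE_eq_of_egen_le T h2 h) hne
          have hcut : e' ∈ cutF T cap n := h1
          rw [cutF, Finset.mem_filter, mem_lowF] at hcut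
          obtain ⟨a, hagen, hale, _⟩ := anc_filter T
            (by have := egen_pos T e; omega : 1 ≤ T.egen e + 1) e' (by omega)
          have hea : T.edgeLE e a := edgeLE_total T h2 hale (by omega)
          have hch : T.parent a.val = e.val := child_of_le_succ T hea (by omega)
          exact ⟨a, (mem_chF T).2 hch, h1, hale⟩
        · rintro ⟨g, hg, h1, h2⟩
          rw [mem_chF] at hg
          exact ⟨h1, edgeLE_trans T ⟨1, by simpa using hg⟩ h2⟩
      have hdisj : (↑(chF T e) : Set T.Edge).PairwiseDisjoint
          (fun g => (cutF T cap n).filter (fun e' => T.edgeLE g e')) := by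
        intro g1 h1 g2 h2 hne
        simp only [Function.onFun]
        rw [Finset.disjoint_left]
        intro x hx1 hx2
        rw [Finset.mem_filter] at hx1 hx2
        rw [Finset.mem_coe, mem_chF] at h1 h2
        exact hne (edgeLE_unique_gen T hx1.2 hx2.2
          (by rw [egen_child T h1, egen_child T h2]))
      rw [hpart, Finset.sum_biUnion hdisj, hFn]
      apply Finset.sum_le_sum
      intro g hg
      have hgch := (mem_chF T).1 hg
      have hggen : T.egen g = T.egen e + 1 := egen_child T hgch
      apply ih g (by omega) (by omega)
      intro g' hg'
      have hle' : T.edgeLE g' (pedge T g) := edgeLT_le_pedge T hg'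
      have hpe : pedge T g = e := Subtype.ext (by
        rw [(pedge_spec T (by have := egen_pos T e; omega)).1, hgch])
      rw [hpe] at hle'
      rcases eq_or_ne g' e with rfl | hne
      · exact ht
      · exact hpre g' ⟨hle', hne⟩
  
end Stmt11Aux
namespace Stmt11Aux

open Classical

variable (T : RTree)

lemma ray_iterate (ξ : T.Ray) (m k : ℕ) (h : k ≤ m) :
    T.parent^[k] (ξ.toFun m) = ξ.toFun (m - k) := by
  induction k generalizing m with
  | zero => simp
  | succ k ih =>
    have hm : m = (m - 1) + 1 := by omega
    rw [Function.iterate_succ_apply, hm, ξ.parent_eq, ih (m-1) (by omega)]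
    congr 1
    omega

lemma ray_edge_egen (ξ : T.Ray) (j : ℕ) : T.egen (ξ.edge j) = j + 1 := by
  apply (Nat.find_eq_iff _).2
  constructor
  · show T.parent^[j+1] (ξ.toFun (j+1)) = T.root
    rw [ray_iterate T ξ _ _ (le_refl _)]
    simpa using ξ.zero_eq
  · intro m hm hc
    show False
    rw [show (T.parent^[m] ((ξ.edge j).val) = T.root) = (T.parent^[m] (ξ.toFun (j+1)) = T.root) from rfl,
      ray_iterate T ξ _ _ (by omega)] at hc
    exact ξ.ne_root (j - m) (by rw [show j - m + 1 = j + 1 - m by omega]; exact hc)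

lemma ray_edge_le (ξ : T.Ray) {i j : ℕ} (h : i ≤ j) : T.edgeLE (ξ.edge i) (ξ.edge j) := by
  refine ⟨j - i, ?_⟩
  show T.parent^[j-i] (ξ.toFun (j+1)) = ξ.toFun (i+1)
  rw [ray_iterate T ξ _ _ (by omega)]
  congr 1
  omega

lemma ray_edge_ge (ξ : T.Ray) {g : T.Edge} {j : ℕ} (h : T.edgeLE g (ξ.edge j)) :
    ∃ i ≤ j, g = ξ.edge i := by
  obtain ⟨hle, hn⟩ := (edgeLE_iff T).1 h
  rw [ray_edge_egen T ξ j] at hle hn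
  have h1 : 1 ≤ T.egen g := egen_pos T g
  refine ⟨T.egen g - 1, by omega, ?_⟩
  apply Subtype.ext
  rw [← hn]
  show _ = ξ.toFun (T.egen g - 1 + 1)
  have := ray_iterate T ξ (j+1) (j + 1 - T.egen g) (by omega)
  rw [show T.parent^[j + 1 - T.egen g] ((ξ.edge j).val) = T.parent^[j + 1 - T.egen g] (ξ.toFun (j+1)) from rfl, this]
  congr 1
  omega

variable (cap : T.Edge → ℝ)

lemma cutF_isCutset {n : ℕ} (hn : 1 ≤ n) : T.IsCutset (↑(cutF T cap n)) := by
  intro ξ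
  have hexists : ∃ j, trig T cap n (ξ.edge j) :=
    ⟨n - 1, Or.inl (by rw [ray_edge_egen]; omega)⟩
  set m := Nat.find hexists with hm
  have hPm : trig T cap n (ξ.edge m) := Nat.find_spec hexists
  have hmle : m ≤ n - 1 := Nat.find_min' hexists (Or.inl (by rw [ray_edge_egen]; omega))
  have hmem : ξ.edge m ∈ cutF T cap n := by
    rw [cutF, Finset.mem_filter, mem_lowF]
    refine ⟨by rw [ray_edge_egen]; omega, hPm, ?_⟩
    intro g hg
    obtain ⟨i, hi, rfl⟩ := ray_edge_ge T ξ hg.1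
    have hne : i ≠ m := by
      intro hc
      exact hg.2 (by rw [hc])
    exact Nat.find_min hexists (by omega)
  refine ⟨m, hmem, ?_⟩
  intro k hk
  simp only [Finset.coe_sort_coe, Finset.mem_coe] at hk
  rw [cutF, Finset.mem_filter] at hk
  by_contra hne
  rcases lt_or_gt_of_ne (show k ≠ m from hne) with h | h
  · exact Nat.find_min hexists h hk.2.1
  · refine hk.2.2 (ξ.edge m) ⟨ray_edge_le T ξ (by omega), ?_⟩ hPm
    intro hc
    have := ray_edge_egen T ξ m
    rw [hc, ray_edge_egen T ξ k] at this
    omega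

/-- The total cut bound: the capacity of the greedy cut is at most the sum of the truncated
flow values over the first generation. -/
lemma cutF_total_bound (n : ℕ) (hn : 1 ≤ n) :
    ∑ e' ∈ cutF T cap n, cap e' ≤ ∑ e ∈ genF T 1, G T cap (n - 1) e := by
  rw [← sum_ancestor_partition T (cutF T cap n) cap (le_refl 1) (fun e' _ => egen_pos T e')]
  apply Finset.sum_le_sum
  intro e he
  rw [mem_genF] at he
  have hbound := cut_bound T cap n n e (by omega) (by omega) ?_
  · rw [Fn, he] at hbound
    exact hbound
  · intro g hg
    exfalso
    have h1 := edgeLE_egen_le T hg.1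
    have h2 := egen_pos T g
    exact hg.2 (edgeLE_unique_gen T hg.1 (edgeLE_refl T e) (by omega))

end Stmt11Aux
namespace Stmt11Aux

open Classical

lemma tsum_subtype_finset {α : Type} {M : Type*} [AddCommMonoid M] [TopologicalSpace M]
    [T2Space M] {p : α → Prop} (s : Finset α) (h : ∀ x, x ∈ s ↔ p x) (f : α → M) :
    ∑' (x : {x // p x}), f x.val = ∑ x ∈ s, f x := by
  haveI : Fintype {x // p x} := Fintype.ofFinset s h
  rw [tsum_fintype]
  exact (Finset.sum_subtype s h f).symm

variable (T : RTree)

lemma finite_lt (e : T.Edge) : {g : T.Edge | T.edgeLT g e}.Finite :=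
  (finite_path T e).subset (fun g hg => hg.1)

/-- Strict ancestors of `e`, as a Finset. -/
noncomputable def ltF (e : T.Edge) : Finset T.Edge := (finite_lt T e).toFinset

lemma mem_ltF {e g : T.Edge} : g ∈ ltF T e ↔ T.edgeLT g e := by simp [ltF]

lemma pedge_edgeLT {e : T.Edge} (h : 2 ≤ T.egen e) : T.edgeLT (pedge T e) e := by
  refine ⟨pedge_edgeLE T h, ?_⟩
  intro hc
  have := (pedge_spec T h).2
  rw [hc] at this
  omega

variable (w d : T.Edge → ℝ) (hw : ∀ e, 0 < w e) (hd : ∀ e, 0 < d e)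

include hd in
lemma dsum_pos {e : T.Edge} (h2 : 2 ≤ T.egen e) :
    0 < ∑' g : {g : T.Edge // T.edgeLT g e}, (d g.val)⁻¹ := by
  rw [tsum_subtype_finset (ltF T e) (fun g => mem_ltF T) (fun g => (d g)⁻¹)]
  apply Finset.sum_pos (fun g _ => inv_pos.2 (hd g))
  exact ⟨pedge T e, (mem_ltF T).2 (pedge_edgeLT T h2)⟩

include hw hd in
lemma psi_pos (e : T.Edge) : 0 < T.psi w d e := by
  rw [RTree.psi]
  split
  · exact one_pos
  · rename_i hgen
    have h2 : 2 ≤ T.egen e := by have := egen_pos T e; omega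
    have hnum := dsum_pos T d hd h2
    exact div_pos hnum (add_pos (inv_pos.2 (hw e)) hnum)

lemma bigPsi_eq_prod (e : T.Edge) :
    T.bigPsi w d e = ∏ g ∈ pathF T e, T.psi w d g := by
  rw [RTree.bigPsi]
  have h1 : ∀ g : T.Edge, (∏ᶠ (_ : T.edgeLE g e), T.psi w d g)
      = if T.edgeLE g e then T.psi w d g else 1 := fun g => finprod_eq_if
  rw [finprod_congr h1]
  rw [finprod_eq_prod_of_mulSupport_subset _ (s := pathF T e) ?hsupp]
  · apply Finset.prod_congr rfl
    intro g hg
    rw [if_pos ((mem_pathF T).1 hg)]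
  · intro g hg
    rw [Function.mem_mulSupport] at hg
    by_contra hc
    rw [Finset.mem_coe, mem_pathF] at hc
    exact hg (by rw [if_neg hc])

include hw hd in
lemma bigPsi_pos (e : T.Edge) : 0 < T.bigPsi w d e := by
  rw [bigPsi_eq_prod]
  exact Finset.prod_pos (fun g _ => psi_pos T w d hw hd g)

include hw hd in
lemma conductance_pos (hpsi : ∀ e : T.Edge, 1 < T.egen e → T.psi w d e < 1) (e : T.Edge) :
    0 < T.conductance w d e := by
  rw [RTree.conductance]
  split
  · exact one_pos
  · rename_i hgen
    have h2 : 1 < T.egen e := by have := egen_pos T e; omega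
    exact div_pos (bigPsi_pos T w d hw hd e) (by have := hpsi e h2; linarith)

end Stmt11Aux
namespace Stmt11Aux

open Classical

variable (T : RTree) (cap : T.Edge → ℝ) (hcap : ∀ e, 0 < cap e)
include hcap

lemma strength_level (m : ℕ) (hm : 1 ≤ m) :
    ∑ e' ∈ genF T m, theta T cap e' = ∑ e ∈ genF T 1, fv T cap e := by
  rw [← sum_ancestor_partition T (genF T m) (theta T cap) (le_refl 1)
    (fun e' _ => egen_pos T e')]
  apply Finset.sum_congr rfl
  intro e he
  rw [mem_genF] at he
  rw [← level_sum T (theta T cap) (theta_flow T cap hcap) e m (by omega)]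
  exact theta_gen_one T cap he

lemma double_count (n m : ℕ) (hnm : n ≤ m) (u : T.Edge → ℝ) (hu : ∀ e, 0 ≤ u e) :
    ∑ g ∈ lowF T n, theta T cap g * u g ≤
      ∑ e' ∈ genF T m, theta T cap e' * ∑ g ∈ pathF T e', u g := by
  have step1 : ∑ g ∈ lowF T n, theta T cap g * u g
      = ∑ g ∈ lowF T n, ∑ e' ∈ genF T m,
          (if T.edgeLE g e' then theta T cap e' * u g else 0) := by
    apply Finset.sum_congr rfl
    intro g hg
    rw [mem_lowF] at hg
    rw [level_sum T (theta T cap) (theta_flow T cap hcap) g m (by omega)]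
    rw [Finset.sum_mul, ← Finset.sum_filter]
  rw [step1, Finset.sum_comm]
  apply Finset.sum_le_sum
  intro e' _
  rw [← Finset.sum_filter, ← Finset.mul_sum]
  apply mul_le_mul_of_nonneg_left ?_ (theta_nonneg T cap hcap e')
  apply Finset.sum_le_sum_of_subset_of_nonneg
  · intro g hg
    rw [Finset.mem_filter] at hg
    exact (mem_pathF T).2 hg.2
  · intro g _ _
    exact hu g

end Stmt11Aux

end RTree

open RTree.Stmt11Aux

/-- Equip `𝒢` with the conductances `c(e) = 1` for `|e| = 1` and
`c(e) = Ψ(e)/(1-ψ(e))` for `|e| > 1` coming from weights `(w_e, δ_e)` (with `ψ(e) < 1` for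
`|e| > 1`).  For any positive `(u_e)` with `Σ_{|e|=1} u_e = 1` and
`inf_{π∈Π} Σ_{e∈π} u_e c(e) > 0`, there is a nonzero flow from the root to infinity whose
energy is at most `lim_{n→∞} max_{|e|=n} Σ_{g≤e} u_g`. -/
theorem stmt11 (T : RTree) (w d : T.Edge → ℝ)
    (hw : ∀ e, 0 < w e) (hd : ∀ e, 0 < d e)
    (hpsi : ∀ e : T.Edge, 1 < T.egen e → T.psi w d e < 1)
    (u : T.Edge → ℝ) (hu : ∀ e, 0 < u e)
    (husum : (∑' e : {e : T.Edge // T.egen e = 1}, u e.val) = 1)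
    (hinf : 0 < ⨅ (π : Set T.Edge) (_ : T.IsCutset π),
        ∑' e : π, ENNReal.ofReal (u e.val * T.conductance w d e.val)) :
    ∃ θ : T.Edge → ℝ, T.IsFlow θ ∧ θ ≠ 0 ∧
      T.energy (T.conductance w d) θ ≤
        Filter.limsup (fun n : ℕ =>
          ⨆ (e : T.Edge) (_ : T.egen e = n),
            ∑' g : {g : T.Edge // T.edgeLE g e}, ENNReal.ofReal (u g.val))
          Filter.atTop := by
  classical
  set c : T.Edge → ℝ := T.conductance w d with hc
  set cap : T.Edge → ℝ := fun e => u e * c e with hcapdef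
  have hcpos : ∀ e, 0 < c e := conductance_pos T w d hw hd hpsi
  have hcap : ∀ e, 0 < cap e := fun e => mul_pos (hu e) (hcpos e)
  set s₀ : ℝ := ∑ e ∈ genF T 1, fv T cap e with hs₀
  set ε := ⨅ (π : Set T.Edge) (_ : T.IsCutset π),
      ∑' e : π, ENNReal.ofReal (u e.val * T.conductance w d e.val) with hεdef
  -- Step 1: ε is at most the truncated strength at every level
  have hstep1 : ∀ k : ℕ, ε ≤ ENNReal.ofReal (∑ e ∈ genF T 1, G T cap k e) := by
    intro k
    have hcut := cutF_isCutset T cap (n := k + 1) (by omega)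
    have h1 : ε ≤ ∑' e : (↑(cutF T cap (k+1)) : Set T.Edge),
        ENNReal.ofReal (u e.val * T.conductance w d e.val) := by
      exact iInf₂_le _ hcut
    have h2 : (∑' e : (↑(cutF T cap (k+1)) : Set T.Edge),
        ENNReal.ofReal (u e.val * T.conductance w d e.val))
        = ∑ e ∈ cutF T cap (k+1), ENNReal.ofReal (cap e) := by
      exact tsum_subtype_finset (cutF T cap (k+1)) (fun x => Iff.rfl)
        (fun e => ENNReal.ofReal (cap e))
    have h3 : (∑ e ∈ cutF T cap (k+1), ENNReal.ofReal (cap e))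
        = ENNReal.ofReal (∑ e ∈ cutF T cap (k+1), cap e) :=
      (ENNReal.ofReal_sum_of_nonneg (fun e _ => (hcap e).le)).symm
    have h4 := cutF_total_bound T cap (k+1) (by omega)
    calc ε ≤ _ := h1
      _ = _ := h2
      _ = _ := h3
      _ ≤ ENNReal.ofReal (∑ e ∈ genF T 1, G T cap (k + 1 - 1) e) :=
          ENNReal.ofReal_le_ofReal h4
      _ = ENNReal.ofReal (∑ e ∈ genF T 1, G T cap k e) := by norm_num
  -- Step 2: positivity of the strength
  have htendsto : Filter.Tendsto (fun k => ∑ e ∈ genF T 1, G T cap k e)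
      Filter.atTop (nhds s₀) :=
    tendsto_finset_sum _ (fun e _ => tendsto_G T cap hcap e)
  have hεs : ε ≤ ENNReal.ofReal s₀ := by
    refine ge_of_tendsto ((ENNReal.continuous_ofReal.tendsto _).comp htendsto) ?_
    exact Filter.Eventually.of_forall hstep1
  have hs₀pos : 0 < s₀ := by
    by_contra h
    push_neg at h
    rw [ENNReal.ofReal_eq_zero.2 h] at hεs
    exact absurd (lt_of_lt_of_le hinf hεs) (lt_irrefl 0)
  -- Step 3: a first-generation edge with positive flow
  obtain ⟨e₀, he₀mem, he₀⟩ : ∃ e ∈ genF T 1, 0 < fv T cap e := by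
    by_contra h
    push_neg at h
    have : s₀ ≤ 0 := Finset.sum_nonpos (fun e he => h e he)
    linarith
  -- Step 4: the scaling factor
  set t : ℝ := (max s₀ 1)⁻¹ with ht
  have hmaxpos : (0:ℝ) < max s₀ 1 := lt_of_lt_of_le one_pos (le_max_right _ _)
  have htpos : 0 < t := inv_pos.2 hmaxpos
  have hts : t * s₀ ≤ 1 := by
    rw [ht]
    rw [inv_mul_le_iff₀ hmaxpos, mul_one]
    exact le_max_left _ _
  have ht1 : t ≤ 1 := by
    rw [ht]
    exact inv_le_one_of_one_le₀ (le_max_right _ _)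
  have hts2 : t ^ 2 * s₀ ≤ 1 := by
    have h0 : t ^ 2 * s₀ = t * (t * s₀) := by ring
    rw [h0]
    calc t * (t * s₀) ≤ t * 1 := mul_le_mul_of_nonneg_left hts htpos.le
      _ ≤ 1 := by linarith
  refine ⟨fun e => t * theta T cap e, ⟨?_, ?_⟩, ?_, ?_⟩
  · exact fun e => mul_nonneg htpos.le (theta_nonneg T cap hcap e)
  · intro e
    rw [tsum_subtype_finset (chF T e) (fun g => mem_chF T)
      (fun g => t * theta T cap g), ← Finset.mul_sum, ← theta_flow T cap hcap e]
  · intro hfun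
    have h0 := congrFun hfun e₀
    simp only [Pi.zero_apply] at h0
    rw [theta_gen_one T cap ((mem_genF T).1 he₀mem)] at h0
    nlinarith
  · -- the energy bound
    set M := fun n : ℕ => ⨆ (e : T.Edge) (_ : T.egen e = n),
        ∑' g : {g : T.Edge // T.edgeLE g e}, ENNReal.ofReal (u g.val) with hM
    rw [RTree.energy]
    have hpt : ∀ e, ENNReal.ofReal ((t * theta T cap e) ^ 2 / c e) ≤
        ENNReal.ofReal (t ^ 2 * (theta T cap e * u e)) := by
      intro e
      apply ENNReal.ofReal_le_ofReal
      have hθle : theta T cap e ≤ u e * c e :=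
        (theta_le_fv T cap hcap e).trans (fv_le_cap T cap hcap e)
      have hθ0 := theta_nonneg T cap hcap e
      rw [div_le_iff₀ (hcpos e)]
      have h1 : theta T cap e * theta T cap e ≤ theta T cap e * (u e * c e) :=
        mul_le_mul_of_nonneg_left hθle hθ0
      have h2 : (0:ℝ) ≤ t ^ 2 := sq_nonneg t
      calc (t * theta T cap e) ^ 2 = t ^ 2 * (theta T cap e * theta T cap e) := by ring
        _ ≤ t ^ 2 * (theta T cap e * (u e * c e)) := mul_le_mul_of_nonneg_left h1 h2
        _ = t ^ 2 * (theta T cap e * u e) * c e := by ring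
    refine le_trans (ENNReal.tsum_le_tsum hpt) ?_
    rw [ENNReal.tsum_eq_iSup_sum]
    apply iSup_le
    intro A
    rw [Filter.limsup_eq_iInf_iSup_of_nat]
    apply le_iInf
    intro n'
    set n : ℕ := A.sup T.egen with hn
    set m : ℕ := max (max n n') 1 with hmdef
    have hm1 : 1 ≤ m := le_max_right _ _
    have hmn : n ≤ m := le_trans (le_max_left _ _) (le_max_left _ _)
    have hmn' : n' ≤ m := le_trans (le_max_right _ _) (le_max_left _ _)
    have hA : A ⊆ lowF T n := fun e he => (mem_lowF T).2 (Finset.le_sup he)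
    have key : ∑ e ∈ A, ENNReal.ofReal (t ^ 2 * (theta T cap e * u e)) ≤ M m := by
      have e1 : ∑ e ∈ A, ENNReal.ofReal (t ^ 2 * (theta T cap e * u e))
          = ENNReal.ofReal (∑ e ∈ A, t ^ 2 * (theta T cap e * u e)) :=
        (ENNReal.ofReal_sum_of_nonneg (fun e _ => mul_nonneg (sq_nonneg t)
          (mul_nonneg (theta_nonneg T cap hcap e) (hu e).le))).symm
      have e2 : ∑ e ∈ A, t ^ 2 * (theta T cap e * u e)
          ≤ t ^ 2 * ∑ g ∈ lowF T n, theta T cap g * u g := by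
        rw [Finset.mul_sum]
        apply Finset.sum_le_sum_of_subset_of_nonneg hA
        intro e _ _
        exact mul_nonneg (sq_nonneg t) (mul_nonneg (theta_nonneg T cap hcap e) (hu e).le)
      have e3 : ∑ g ∈ lowF T n, theta T cap g * u g
          ≤ ∑ e' ∈ genF T m, theta T cap e' * ∑ g ∈ pathF T e', u g :=
        double_count T cap hcap n m hmn u (fun e => (hu e).le)
      have e4 : ENNReal.ofReal (t ^ 2 * ∑ e' ∈ genF T m, theta T cap e' * ∑ g ∈ pathF T e', u g)
          ≤ ENNReal.ofReal (t ^ 2) * ∑ e' ∈ genF T m,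
              ENNReal.ofReal (theta T cap e') * ENNReal.ofReal (∑ g ∈ pathF T e', u g) := by
        rw [ENNReal.ofReal_mul (sq_nonneg t)]
        apply mul_le_mul_right
        rw [ENNReal.ofReal_sum_of_nonneg (fun e' _ => mul_nonneg (theta_nonneg T cap hcap e')
          (Finset.sum_nonneg (fun g _ => (hu g).le)))]
        apply Finset.sum_le_sum
        intro e' _
        rw [ENNReal.ofReal_mul (theta_nonneg T cap hcap e')]
      have e5 : ∀ e' ∈ genF T m, ENNReal.ofReal (∑ g ∈ pathF T e', u g) ≤ M m := by
        intro e' he'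
        have heq : ENNReal.ofReal (∑ g ∈ pathF T e', u g)
            = ∑' g : {g : T.Edge // T.edgeLE g e'}, ENNReal.ofReal (u g.val) := by
          rw [ENNReal.ofReal_sum_of_nonneg (fun g _ => (hu g).le)]
          exact (tsum_subtype_finset (pathF T e') (fun g => mem_pathF T)
            (fun g => ENNReal.ofReal (u g))).symm
        rw [heq, hM]
        exact le_iSup₂ (f := fun (e : T.Edge) (_ : T.egen e = m) =>
          ∑' g : {g : T.Edge // T.edgeLE g e}, ENNReal.ofReal (u g.val)) e' ((mem_genF T).1 he')
      have e6 : ∑ e' ∈ genF T m, ENNReal.ofReal (theta T cap e')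
            * ENNReal.ofReal (∑ g ∈ pathF T e', u g)
          ≤ (∑ e' ∈ genF T m, ENNReal.ofReal (theta T cap e')) * M m := by
        rw [Finset.sum_mul]
        apply Finset.sum_le_sum
        intro e' he'
        exact mul_le_mul_right (e5 e' he') _
      have e7 : (∑ e' ∈ genF T m, ENNReal.ofReal (theta T cap e')) = ENNReal.ofReal s₀ := by
        rw [← ENNReal.ofReal_sum_of_nonneg (fun e' _ => theta_nonneg T cap hcap e')]
        rw [strength_level T cap hcap m hm1]
      calc ∑ e ∈ A, ENNReal.ofReal (t ^ 2 * (theta T cap e * u e))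
          = ENNReal.ofReal (∑ e ∈ A, t ^ 2 * (theta T cap e * u e)) := e1
        _ ≤ ENNReal.ofReal (t ^ 2 * ∑ g ∈ lowF T n, theta T cap g * u g) :=
            ENNReal.ofReal_le_ofReal e2
        _ ≤ ENNReal.ofReal (t ^ 2 * ∑ e' ∈ genF T m,
              theta T cap e' * ∑ g ∈ pathF T e', u g) :=
            ENNReal.ofReal_le_ofReal (mul_le_mul_of_nonneg_left e3 (sq_nonneg t))
        _ ≤ ENNReal.ofReal (t ^ 2) * ∑ e' ∈ genF T m,
              ENNReal.ofReal (theta T cap e') * ENNReal.ofReal (∑ g ∈ pathF T e', u g) := e4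
        _ ≤ ENNReal.ofReal (t ^ 2) * ((∑ e' ∈ genF T m,
              ENNReal.ofReal (theta T cap e')) * M m) := mul_le_mul_right e6 _
        _ = ENNReal.ofReal (t ^ 2) * (ENNReal.ofReal s₀ * M m) := by rw [e7]
        _ = ENNReal.ofReal (t ^ 2 * s₀) * M m := by
            rw [ENNReal.ofReal_mul (sq_nonneg t), mul_assoc]
        _ ≤ 1 * M m := by
            apply mul_le_mul_left
            exact ENNReal.ofReal_le_one.2 hts2
        _ = M m := one_mul _
    exact key.trans (le_iSup₂ (f := fun (i : ℕ) (_ : i ≥ n') => M i) m hmn')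
end

section
/- Fix a real number λ > 1. For every function f : ℕ → [0,1] with f(0) = 1, one has Σ_{n=0}^{∞} f(n) · Π_{i=1}^{n} (1 − f(i))^{λ−1} ≤ (λ+2)/(λ−1). -/
private lemma key_amgm (s t : ℝ) (hs : 0 < s) (ht0 : 0 ≤ t) (ht1 : t ≤ 1) :
    t ^ s * (1 + s * (1 - t)) ≤ 1 := by
  have hs1 : (0:ℝ) < s + 1 := by linarith
  have hp2 : (0:ℝ) ≤ 1 + s*(1-t) := by nlinarith
  have amgm := Real.geom_mean_le_arith_mean_weighted Finset.univ
    ![s/(s+1), 1/(s+1)] ![t, 1 + s*(1-t)]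
    (by intro i _; fin_cases i <;> simp <;> positivity)
    (by simp [Fin.sum_univ_two]; field_simp)
    (by intro i _; fin_cases i <;> simpa)
  simp only [Fin.prod_univ_two, Fin.sum_univ_two, Matrix.cons_val_zero,
    Matrix.cons_val_one, Matrix.head_cons] at amgm
  have hr : s/(s+1) * t + 1/(s+1) * (1+s*(1-t)) = 1 := by field_simp; ring
  have h2 : (t ^ (s/(s+1)) * (1+s*(1-t)) ^ (1/(s+1))) ^ (s+1) ≤ 1 :=
    Real.rpow_le_one (by positivity) (by rw [hr] at amgm; exact amgm) (le_of_lt hs1)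
  rw [Real.mul_rpow (by positivity) (by positivity), ← Real.rpow_mul ht0,
    ← Real.rpow_mul hp2, div_mul_cancel₀ _ (ne_of_gt hs1),
    one_div, inv_mul_cancel₀ (ne_of_gt hs1), Real.rpow_one] at h2
  exact h2

/-- For `λ > 1` and any `f : ℕ → [0,1]` with `f 0 = 1`,
`Σ_{n=0}^∞ f(n) Π_{i=1}^n (1 - f(i))^{λ-1} ≤ (λ+2)/(λ-1)`. -/
theorem stmt12 (lam : ℝ) (hlam : 1 < lam) (f : ℕ → ℝ)
    (hf : ∀ n, f n ∈ Set.Icc (0 : ℝ) 1) (hf0 : f 0 = 1) :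
    (∑' n : ℕ, ENNReal.ofReal
        (f n * ∏ i ∈ Finset.Icc 1 n, (1 - f i) ^ (lam - 1))) ≤
      ENNReal.ofReal ((lam + 2) / (lam - 1)) := by
  set s := lam - 1 with hsdef
  have hs : 0 < s := by rw [hsdef]; linarith
  set P : ℕ → ℝ := fun n => ∏ i ∈ Finset.Icc 1 n, (1 - f i) ^ s with hP
  have hPnonneg : ∀ n, 0 ≤ P n := fun n =>
    Finset.prod_nonneg fun i _ => Real.rpow_nonneg (by linarith [(hf i).2]) s
  have hP0 : P 0 = 1 := by simp [hP]
  have hPsucc : ∀ n, P (n+1) = P n * (1 - f (n+1)) ^ s := by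
    intro n
    simp only [hP]
    rw [Finset.prod_Icc_succ_top (by omega)]
  have hkey : ∀ n, f (n+1) * P (n+1) ≤ (1/s) * (P n - P (n+1)) := by
    intro n
    have hx0 := (hf (n+1)).1
    have hx1 := (hf (n+1)).2
    have h := key_amgm s (1 - f (n+1)) hs (by linarith) (by linarith)
    have h' : (1 - f (n+1)) ^ s * (1 + s * f (n+1)) ≤ 1 := by
      have e : (1:ℝ) - (1 - f (n+1)) = f (n+1) := by ring
      rwa [e] at h
    have hts : 0 ≤ (1 - f (n+1)) ^ s := Real.rpow_nonneg (by linarith) s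
    have h2 : f (n+1) * (1 - f (n+1)) ^ s ≤ (1/s) * (1 - (1 - f (n+1)) ^ s) := by
      rw [div_mul_eq_mul_div, le_div_iff₀ hs, one_mul]
      nlinarith [h']
    rw [hPsucc n]
    calc f (n+1) * (P n * (1 - f (n+1)) ^ s)
        = (f (n+1) * (1 - f (n+1)) ^ s) * P n := by ring
      _ ≤ ((1/s) * (1 - (1 - f (n+1)) ^ s)) * P n :=
          mul_le_mul_of_nonneg_right h2 (hPnonneg n)
      _ = (1/s) * (P n - P n * (1 - f (n+1)) ^ s) := by ring
  have hsum : ∀ N, ∑ n ∈ Finset.range N, f n * P n ≤ 1 + 1/s := by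
    intro N
    cases N with
    | zero => simp; positivity
    | succ M =>
      rw [Finset.sum_range_succ']
      have h1 : ∑ i ∈ Finset.range M, f (i+1) * P (i+1) ≤ (1/s) * (P 0 - P M) := by
        calc ∑ i ∈ Finset.range M, f (i+1) * P (i+1)
            ≤ ∑ i ∈ Finset.range M, (1/s) * (P i - P (i+1)) :=
              Finset.sum_le_sum fun i _ => hkey i
          _ = (1/s) * ∑ i ∈ Finset.range M, (P i - P (i+1)) := by rw [Finset.mul_sum]
          _ = (1/s) * (P 0 - P M) := by rw [Finset.sum_range_sub']
      have h2 : (1/s) * (P 0 - P M) ≤ 1/s := by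
        rw [hP0]
        have := hPnonneg M
        have h1s : 0 < 1/s := by positivity
        nlinarith
      have h3 : f 0 * P 0 = 1 := by rw [hf0, hP0]; ring
      linarith
  have hbound : (1:ℝ) + 1/s ≤ (lam + 2) / s := by
    rw [le_div_iff₀ hs]
    have hss : (1 + 1/s) * s = s + 1 := by field_simp
    rw [hss, hsdef]
    linarith
  rw [ENNReal.tsum_eq_iSup_sum]
  apply iSup_le
  intro F
  obtain ⟨N, hFN⟩ := F.exists_nat_subset_range
  calc ∑ n ∈ F, ENNReal.ofReal (f n * P n)
      ≤ ∑ n ∈ Finset.range N, ENNReal.ofReal (f n * P n) :=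
        Finset.sum_le_sum_of_subset hFN
    _ = ENNReal.ofReal (∑ n ∈ Finset.range N, f n * P n) :=
        (ENNReal.ofReal_sum_of_nonneg fun n _ => mul_nonneg (hf n).1 (hPnonneg n)).symm
    _ ≤ ENNReal.ofReal ((lam+2)/s) := ENNReal.ofReal_le_ofReal ((hsum N).trans hbound)
end

section
/- Fix a real number λ > 1. For every function f : ℕ → [0,1] with f(0) = 1, one has Σ_{n=0}^{∞} f(n) · exp(−(λ−1) Σ_{i=0}^{n} f(i)) ≤ 1 + 3/(λ−1). -/
/-- For `λ > 1` and any `f : ℕ → [0,1]` with `f 0 = 1`,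
`Σ_{n=0}^∞ f(n) exp(-(λ-1) Σ_{i=0}^n f(i)) ≤ 1 + 3/(λ-1)`. -/
theorem stmt13 (lam : ℝ) (hlam : 1 < lam) (f : ℕ → ℝ)
    (hf : ∀ n, f n ∈ Set.Icc (0 : ℝ) 1) (hf0 : f 0 = 1) :
    (∑' n : ℕ, ENNReal.ofReal
        (f n * Real.exp (-(lam - 1) * ∑ i ∈ Finset.range (n + 1), f i))) ≤
      ENNReal.ofReal (1 + 3 / (lam - 1)) := by
  set c := lam - 1 with hc
  have hcpos : 0 < c := by simp only [hc]; linarith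
  set g : ℕ → ℝ := fun n => Real.exp (-c * ∑ i ∈ Finset.range n, f i) with hg
  -- termwise bound
  have hterm : ∀ n, f n * Real.exp (-c * ∑ i ∈ Finset.range (n + 1), f i) ≤
      (g n - g (n + 1)) / c := by
    intro n
    have hfn0 : 0 ≤ f n := (hf n).1
    have hsum : (∑ i ∈ Finset.range (n + 1), f i) =
        (∑ i ∈ Finset.range n, f i) + f n := Finset.sum_range_succ f n
    have hx : c * f n * Real.exp (-(c * f n)) ≤ 1 - Real.exp (-(c * f n)) := by
      have h := Real.add_one_le_exp (c * f n)
      have hE : 0 < Real.exp (-(c * f n)) := Real.exp_pos _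
      have hprod : Real.exp (-(c * f n)) * Real.exp (c * f n) = 1 := by
        rw [← Real.exp_add]; simp
      nlinarith [mul_le_mul_of_nonneg_left h (le_of_lt hE), hprod]
    have hT : 0 < Real.exp (-c * ∑ i ∈ Finset.range n, f i) := Real.exp_pos _
    rw [le_div_iff₀ hcpos]
    have hgexp : g (n + 1) = g n * Real.exp (-(c * f n)) := by
      simp only [hg, hsum, ← Real.exp_add]
      ring_nf
    have hrw : f n * Real.exp (-c * ∑ i ∈ Finset.range (n + 1), f i) * c
        = Real.exp (-c * ∑ i ∈ Finset.range n, f i) * (c * f n * Real.exp (-(c * f n))) := by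
      rw [hsum, show -c * ((∑ i ∈ Finset.range n, f i) + f n)
          = (-c * ∑ i ∈ Finset.range n, f i) + (-(c * f n)) by ring, Real.exp_add]
      ring
    rw [hrw, hgexp]
    calc Real.exp (-c * ∑ i ∈ Finset.range n, f i) * (c * f n * Real.exp (-(c * f n)))
        ≤ Real.exp (-c * ∑ i ∈ Finset.range n, f i) * (1 - Real.exp (-(c * f n))) :=
          mul_le_mul_of_nonneg_left hx (le_of_lt hT)
      _ = g n - g n * Real.exp (-(c * f n)) := by simp only [hg]; ring
  -- partial sums bounded by 1/c
  have hpartial : ∀ N, (∑ n ∈ Finset.range N,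
      f n * Real.exp (-c * ∑ i ∈ Finset.range (n + 1), f i)) ≤ 1 / c := by
    intro N
    calc (∑ n ∈ Finset.range N, f n * Real.exp (-c * ∑ i ∈ Finset.range (n + 1), f i))
        ≤ ∑ n ∈ Finset.range N, (g n - g (n + 1)) / c :=
          Finset.sum_le_sum fun n _ => hterm n
      _ = (∑ n ∈ Finset.range N, (g n - g (n + 1))) / c := by rw [Finset.sum_div]
      _ = (g 0 - g N) / c := by rw [Finset.sum_range_sub' g]
      _ ≤ 1 / c := by
          apply div_le_div_of_nonneg_right ?_ hcpos.le
          have h0 : g 0 = 1 := by simp [hg]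
          have hN : 0 < g N := Real.exp_pos _
          linarith
  have hbound : (1 : ℝ) / c ≤ 1 + 3 / c := by
    have h3 : (1 : ℝ) / c ≤ 3 / c := by
      apply div_le_div_of_nonneg_right ?_ hcpos.le
      norm_num
    have : (0 : ℝ) ≤ 1 := by norm_num
    linarith
  have hnn : ∀ n, 0 ≤ f n * Real.exp (-c * ∑ i ∈ Finset.range (n + 1), f i) :=
    fun n => mul_nonneg (hf n).1 (Real.exp_pos _).le
  rw [ENNReal.tsum_eq_iSup_sum' (fun N => Finset.range N)
    (fun t => Finset.exists_nat_subset_range t)]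
  apply iSup_le
  intro N
  rw [← ENNReal.ofReal_sum_of_nonneg (fun n _ => hnn n)]
  exact ENNReal.ofReal_le_ofReal ((hpartial N).trans hbound)
end

section
/- Let (w_k)_{k≥1} and (d_k)_{k≥1} be sequences of positive reals and M ∈ (1,∞) such that 1/M ≤ (Σ_{k=1}^{n} d_k^{−1})/(Σ_{k=1}^{n} w_k^{−1}) ≤ M for every n ≥ 1. Fix m ≥ 1 and set p^{−1} = Σ_{k=1}^{m} d_k^{−1}. Then for every N > m, Π_{n=m+1}^{N} ( 1 + p^{−1} w_n^{−1} / ( (p^{−1} + Σ_{k=m+1}^{n−1} d_k^{−1}) · (2p^{−1} + Σ_{k=m+1}^{n−1} d_k^{−1} + w_n^{−1}) ) ) ≤ exp(M³). -/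
/-- Telescoping sum over `Icc (m+1) N`. -/
lemma telescope_icc (g : ℕ → ℝ) (m : ℕ) :
    ∀ N, m ≤ N → ∑ n ∈ Finset.Icc (m + 1) N, (g (n - 1) - g n) = g m - g N := by
  intro N
  induction N with
  | zero =>
    intro h
    rw [Finset.Icc_eq_empty (by omega)]
    have hm0 : m = 0 := by omega
    simp [hm0]
  | succ N ih =>
    intro h
    rcases Nat.lt_or_ge N m with hlt | hge
    · have : m = N + 1 := by omega
      subst this
      rw [Finset.Icc_eq_empty (by omega)]
      simp
    · rw [Finset.sum_Icc_succ_top (by omega), ih hge]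
      simp only [Nat.add_sub_cancel]
      ring

/-- Let `(w_k)`, `(d_k)` be positive sequences and `M ∈ (1,∞)` with
`1/M ≤ (Σ_{k=1}^n d_k⁻¹)/(Σ_{k=1}^n w_k⁻¹) ≤ M` for all `n ≥ 1`.  Fix `m ≥ 1` and set
`p⁻¹ = Σ_{k=1}^m d_k⁻¹`.  Then for every `N > m`,
`Π_{n=m+1}^N (1 + p⁻¹ w_n⁻¹ / ((p⁻¹ + Σ_{k=m+1}^{n-1} d_k⁻¹)(2p⁻¹ + Σ_{k=m+1}^{n-1} d_k⁻¹ + w_n⁻¹))) ≤ exp(M³)`. -/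
theorem stmt16 (w d : ℕ → ℝ) (hw : ∀ k, 1 ≤ k → 0 < w k) (hd : ∀ k, 1 ≤ k → 0 < d k)
    (M : ℝ) (hM : 1 < M)
    (hcond : ∀ n : ℕ, 1 ≤ n →
      1 / M ≤ (∑ k ∈ Finset.Icc 1 n, (d k)⁻¹) / (∑ k ∈ Finset.Icc 1 n, (w k)⁻¹) ∧
      (∑ k ∈ Finset.Icc 1 n, (d k)⁻¹) / (∑ k ∈ Finset.Icc 1 n, (w k)⁻¹) ≤ M)
    (m : ℕ) (hm : 1 ≤ m) :
    ∀ N : ℕ, m < N →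
      (∏ n ∈ Finset.Icc (m + 1) N,
        (1 + (∑ k ∈ Finset.Icc 1 m, (d k)⁻¹) * (w n)⁻¹ /
          (((∑ k ∈ Finset.Icc 1 m, (d k)⁻¹) + ∑ k ∈ Finset.Icc (m + 1) (n - 1), (d k)⁻¹) *
           (2 * (∑ k ∈ Finset.Icc 1 m, (d k)⁻¹) +
             (∑ k ∈ Finset.Icc (m + 1) (n - 1), (d k)⁻¹) + (w n)⁻¹)))) ≤
      Real.exp (M ^ 3) := by
  intro N hN
  have hM0 : (0:ℝ) < M := lt_trans one_pos hM
  set D : ℕ → ℝ := fun n => ∑ k ∈ Finset.Icc 1 n, (d k)⁻¹ with hD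
  set W : ℕ → ℝ := fun n => ∑ k ∈ Finset.Icc 1 n, (w k)⁻¹ with hW
  have hDpos : ∀ n, 1 ≤ n → 0 < D n := by
    intro n hn
    apply Finset.sum_pos
    · intro k hk
      rw [Finset.mem_Icc] at hk
      exact inv_pos.2 (hd k hk.1)
    · exact ⟨1, Finset.mem_Icc.2 ⟨le_refl 1, hn⟩⟩
  have hWpos : ∀ n, 1 ≤ n → 0 < W n := by
    intro n hn
    apply Finset.sum_pos
    · intro k hk
      rw [Finset.mem_Icc] at hk
      exact inv_pos.2 (hw k hk.1)
    · exact ⟨1, Finset.mem_Icc.2 ⟨le_refl 1, hn⟩⟩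
  have hWD : ∀ n, 1 ≤ n → W n ≤ M * D n := by
    intro n hn
    have h1 := (hcond n hn).1
    rw [div_le_div_iff₀ hM0 (hWpos n hn)] at h1
    linarith
  have hDW : ∀ n, 1 ≤ n → D n ≤ M * W n := by
    intro n hn
    have h2 := (hcond n hn).2
    rw [div_le_iff₀ (hWpos n hn)] at h2
    linarith
  have hPpos : 0 < D m := hDpos m hm
  -- split partial sums
  have hsplit : ∀ n, m + 1 ≤ n →
      D m + ∑ k ∈ Finset.Icc (m + 1) (n - 1), (d k)⁻¹ = D (n - 1) := by
    intro n hn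
    have h1 : Finset.Icc 1 m = Finset.Ioc 0 m := by rw [← Finset.Icc_add_one_left_eq_Ioc, zero_add]
    have h2 : Finset.Icc (m+1) (n-1) = Finset.Ioc m (n-1) := by rw [← Finset.Icc_add_one_left_eq_Ioc]
    have h3 : Finset.Icc 1 (n-1) = Finset.Ioc 0 (n-1) := by rw [← Finset.Icc_add_one_left_eq_Ioc, zero_add]
    simp only [hD, h1, h2, h3]
    exact Finset.sum_Ioc_consecutive _ (Nat.zero_le m) (by omega)
  -- per-term bound
  have key : ∀ n ∈ Finset.Icc (m + 1) N,
      D m * (w n)⁻¹ /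
        ((D m + ∑ k ∈ Finset.Icc (m + 1) (n - 1), (d k)⁻¹) *
         (2 * D m + (∑ k ∈ Finset.Icc (m + 1) (n - 1), (d k)⁻¹) + (w n)⁻¹)) ≤
      D m * M ^ 2 * ((W (n - 1))⁻¹ - (W n)⁻¹) := by
    intro n hn
    rw [Finset.mem_Icc] at hn
    have hn1 : 1 ≤ n - 1 := by omega
    have hwn : 0 < (w n)⁻¹ := inv_pos.2 (hw n (by omega))
    have hS := hsplit n hn.1
    have hDn1 : 0 < D (n-1) := hDpos _ hn1
    have hWn1 : 0 < W (n-1) := hWpos _ hn1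
    have hWn : 0 < W n := hWpos _ (by omega)
    have hWsucc : W n = W (n-1) + (w n)⁻¹ := by
      have : n = (n-1) + 1 := by omega
      rw [this]
      simp only [hW]
      rw [Finset.sum_Icc_succ_top (by omega)]
      simp
    have hdiff : (W (n-1))⁻¹ - (W n)⁻¹ = (w n)⁻¹ / (W (n-1) * W n) := by
      rw [inv_sub_inv hWn1.ne' hWn.ne', hWsucc]
      ring_nf
    set S := ∑ k ∈ Finset.Icc (m + 1) (n - 1), (d k)⁻¹ with hSdef
    have hden : 2 * D m + S + (w n)⁻¹ = D (n-1) + D m + (w n)⁻¹ := by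
      rw [← hS]; ring
    rw [hdiff, hS, hden, ← mul_div_assoc]
    have hWb1 : W (n-1) ≤ M * D (n-1) := hWD _ hn1
    have hWb2 : W n ≤ M * (D (n-1) + D m + (w n)⁻¹) := by
      rw [hWsucc]
      nlinarith
    rw [div_le_div_iff₀ (by positivity) (by positivity)]
    have hprod := mul_le_mul hWb1 hWb2 hWn.le (by positivity : (0:ℝ) ≤ M * D (n-1))
    have hfin := mul_le_mul_of_nonneg_left hprod
      (by positivity : (0:ℝ) ≤ D m * (w n)⁻¹)
    nlinarith [hfin]
  -- sum bound
  have hsum : ∑ n ∈ Finset.Icc (m + 1) N,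
      D m * (w n)⁻¹ /
        ((D m + ∑ k ∈ Finset.Icc (m + 1) (n - 1), (d k)⁻¹) *
         (2 * D m + (∑ k ∈ Finset.Icc (m + 1) (n - 1), (d k)⁻¹) + (w n)⁻¹)) ≤ M ^ 3 := by
    calc _ ≤ ∑ n ∈ Finset.Icc (m + 1) N, D m * M ^ 2 * ((W (n - 1))⁻¹ - (W n)⁻¹) :=
          Finset.sum_le_sum key
      _ = D m * M ^ 2 * ((W m)⁻¹ - (W N)⁻¹) := by
          rw [← Finset.mul_sum, telescope_icc (fun n => (W n)⁻¹) m N hN.le]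
      _ ≤ M ^ 3 := by
          have hWm : 0 < W m := hWpos m hm
          have hWN : 0 < W N := hWpos N (by omega)
          have hDm : D m ≤ M * W m := hDW m hm
          have h1 : D m * M ^ 2 * ((W m)⁻¹ - (W N)⁻¹) ≤ D m * M ^ 2 * (W m)⁻¹ := by
            have hh : (0:ℝ) ≤ D m * M ^ 2 * (W N)⁻¹ := by positivity
            nlinarith [hh]
          have h2 : D m * (W m)⁻¹ ≤ M := by
            calc D m * (W m)⁻¹ ≤ (M * W m) * (W m)⁻¹ :=
                  mul_le_mul_of_nonneg_right hDm (by positivity)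
              _ = M := by field_simp
          calc D m * M ^ 2 * ((W m)⁻¹ - (W N)⁻¹) ≤ D m * M ^ 2 * (W m)⁻¹ := h1
            _ = (D m * (W m)⁻¹) * M ^ 2 := by ring
            _ ≤ M * M ^ 2 := mul_le_mul_of_nonneg_right h2 (by positivity)
            _ = M ^ 3 := by ring
  -- product ≤ exp of sum
  calc (∏ n ∈ Finset.Icc (m + 1) N,
        (1 + D m * (w n)⁻¹ /
          ((D m + ∑ k ∈ Finset.Icc (m + 1) (n - 1), (d k)⁻¹) *
           (2 * D m + (∑ k ∈ Finset.Icc (m + 1) (n - 1), (d k)⁻¹) + (w n)⁻¹))))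
      ≤ ∏ n ∈ Finset.Icc (m + 1) N,
          Real.exp (D m * (w n)⁻¹ /
            ((D m + ∑ k ∈ Finset.Icc (m + 1) (n - 1), (d k)⁻¹) *
             (2 * D m + (∑ k ∈ Finset.Icc (m + 1) (n - 1), (d k)⁻¹) + (w n)⁻¹))) := by
        apply Finset.prod_le_prod
        · intro n hn
          rw [Finset.mem_Icc] at hn
          have hS := hsplit n hn.1
          have hn1 : (1:ℕ) ≤ n - 1 := by omega
          have hwn : 0 < (w n)⁻¹ := inv_pos.2 (hw n (by omega))
          have hDn1 : 0 < D (n-1) := hDpos _ hn1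
          have hd1 : 0 < D m + ∑ k ∈ Finset.Icc (m + 1) (n - 1), (d k)⁻¹ := by
            rw [hS]; exact hDn1
          have hd2 : 0 < 2 * D m + (∑ k ∈ Finset.Icc (m + 1) (n - 1), (d k)⁻¹) + (w n)⁻¹ := by
            nlinarith
          positivity
        · intro n _
          linarith [Real.add_one_le_exp (D m * (w n)⁻¹ /
            ((D m + ∑ k ∈ Finset.Icc (m + 1) (n - 1), (d k)⁻¹) *
             (2 * D m + (∑ k ∈ Finset.Icc (m + 1) (n - 1), (d k)⁻¹) + (w n)⁻¹)))]
    _ = Real.exp (∑ n ∈ Finset.Icc (m + 1) N,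
          D m * (w n)⁻¹ /
            ((D m + ∑ k ∈ Finset.Icc (m + 1) (n - 1), (d k)⁻¹) *
             (2 * D m + (∑ k ∈ Finset.Icc (m + 1) (n - 1), (d k)⁻¹) + (w n)⁻¹))) :=
        (Real.exp_sum _ _).symm
    _ ≤ Real.exp (M ^ 3) := Real.exp_le_exp.2 hsum
end

section
/- Fix β > 1 and δ > 0, and define ψ_1 = 1 and, for n ≥ 2, ψ_n = (Σ_{k=1}^{n−1} β^k/δ) / (β^n + Σ_{k=1}^{n−1} β^k/δ). Then there exist constants c₄, c₅ ∈ (0,∞) such that for every n ≥ 1, c₄ · (δ(β−1)+1)^{−n} ≤ Π_{k=1}^{n} ψ_k ≤ c₅ · (δ(β−1)+1)^{−n}. -/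
/-- Fix `β > 1`, `δ > 0` and let `ψ_1 = 1` and, for `n ≥ 2`,
`ψ_n = (Σ_{k=1}^{n-1} β^k/δ)/(β^n + Σ_{k=1}^{n-1} β^k/δ)`.  Then there are constants
`c₄, c₅ ∈ (0,∞)` with `c₄ (δ(β-1)+1)^{-n} ≤ Π_{k=1}^n ψ_k ≤ c₅ (δ(β-1)+1)^{-n}` for all
`n ≥ 1`. -/
theorem stmt18 (β δ : ℝ) (hβ : 1 < β) (hδ : 0 < δ) (ψ : ℕ → ℝ)
    (hψ1 : ψ 1 = 1)
    (hψ : ∀ n : ℕ, 2 ≤ n →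
      ψ n = (∑ k ∈ Finset.Icc 1 (n - 1), β ^ k / δ) /
            (β ^ n + ∑ k ∈ Finset.Icc 1 (n - 1), β ^ k / δ)) :
    ∃ c₄ c₅ : ℝ, 0 < c₄ ∧ 0 < c₅ ∧ ∀ n : ℕ, 1 ≤ n →
      c₄ * (δ * (β - 1) + 1) ^ (-(n : ℤ)) ≤ (∏ k ∈ Finset.Icc 1 n, ψ k) ∧
      (∏ k ∈ Finset.Icc 1 n, ψ k) ≤ c₅ * (δ * (β - 1) + 1) ^ (-(n : ℤ)) := by
  have hβ0 : (0:ℝ) < β := lt_trans one_pos hβ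
  have hβ1 : β - 1 ≠ 0 := sub_ne_zero.mpr (ne_of_gt hβ)
  have hβne : β ≠ 1 := ne_of_gt hβ
  set A := δ * (β - 1) + 1 with hA_def
  have hA1 : 1 < A := by
    have : 0 < δ * (β - 1) := mul_pos hδ (by linarith)
    rw [hA_def]; linarith
  have hA0 : (0:ℝ) < A := lt_trans one_pos hA1
  have hAne : A ≠ 0 := ne_of_gt hA0
  set r := β⁻¹ with hr_def
  have hr0 : 0 ≤ r := le_of_lt (inv_pos.mpr hβ0)
  have hr1 : r < 1 := by
    rw [hr_def]
    rw [inv_lt_one_iff₀]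
    right; exact hβ
  set K := (A - 1) / (A * (β - 1)) with hK_def
  have hK0 : 0 ≤ K := by
    apply div_nonneg (by linarith)
    have : 0 < β - 1 := by linarith
    positivity
  set M := K * (1 - r)⁻¹ with hM_def
  -- key pointwise bounds
  have key : ∀ n : ℕ, 2 ≤ n →
      (1/A) * Real.exp (-(K * r ^ (n-2))) ≤ ψ n ∧ ψ n ≤ 1/A := by
    intro n hn
    have hn1 : 1 ≤ n := le_trans (by norm_num) hn
    set t := β ^ (n-1) with ht_def
    have ht1 : 1 < t := one_lt_pow₀ hβ (by omega)
    have hsum : (∑ k ∈ Finset.Icc 1 (n-1), β ^ k / δ) = (β^n - β) / ((β-1) * δ) := by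
      rw [← Finset.sum_div]
      have hIcc : Finset.Icc 1 (n-1) = Finset.Ico 1 n := by
        rw [← Finset.Ico_add_one_right_eq_Icc]
        congr 1
        omega
      rw [hIcc, geom_sum_Ico hβne hn1, pow_one, div_div]
    have hbn : β ^ n = β * t := by
      rw [ht_def, ← pow_succ']
      congr 1
      omega
    have htpos : (0:ℝ) < A * t - 1 := by nlinarith
    have hform : ψ n = (t - 1) / (A * t - 1) := by
      rw [hψ n hn, hsum]
      have hbb : β ≤ β ^ n := by
        calc β = β ^ 1 := (pow_one β).symm
        _ ≤ β ^ n := pow_le_pow_right₀ (le_of_lt hβ) hn1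
      have hd2 : (0:ℝ) < β ^ n + (β^n - β)/((β-1)*δ) := by
        have h1 : (0:ℝ) < β ^ n := pow_pos hβ0 n
        have h2 : 0 ≤ (β^n - β)/((β-1)*δ) := by
          apply div_nonneg (by linarith)
          have : 0 < β - 1 := by linarith
          positivity
        linarith
      rw [div_eq_div_iff (ne_of_gt hd2) (ne_of_gt htpos), hbn, hA_def]
      field_simp
      ring
    have hAt : (0:ℝ) < A * (t - 1) := by
      have : 0 < t - 1 := by linarith
      positivity
    constructor
    · -- lower bound
      have hb2 : (1:ℝ) ≤ β ^ (n-2) := one_le_pow₀ (le_of_lt hβ)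
      have hbp2 : (0:ℝ) < β ^ (n-2) := by positivity
      have htt : (β - 1) * β^(n-2) ≤ t - 1 := by
        have he : t = β * β^(n-2) := by
          rw [ht_def, ← pow_succ']
          congr 1
          omega
        nlinarith
      have hRHS : K * r^(n-2) = (A-1) / (A*(β-1)*β^(n-2)) := by
        rw [hK_def, hr_def, inv_pow]
        field_simp
      have hx : (A - 1) / (A * (t - 1)) ≤ K * r ^ (n-2) := by
        rw [hRHS]
        apply div_le_div_of_nonneg_left (by linarith) _ _
        · have : 0 < β - 1 := by linarith
          positivity
        · calc A*(β-1)*β^(n-2) = A * ((β-1)*β^(n-2)) := by ring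
          _ ≤ A * (t-1) := by nlinarith
      have hexp : (A*t - 1) / (A*(t-1)) ≤ Real.exp (K * r^(n-2)) := by
        have h1 := Real.add_one_le_exp (K * r^(n-2))
        have h2 : (A*t-1)/(A*(t-1)) = 1 + (A-1)/(A*(t-1)) := by
          rw [eq_comm, one_add_div hAt.ne']
          congr 1
          ring
        rw [h2]; linarith
      have hfin : (A*t-1) ≤ (t-1) * (A * Real.exp (K*r^(n-2))) := by
        calc A*t-1 = (A*t-1)/(A*(t-1)) * (A*(t-1)) := by rw [div_mul_cancel₀ _ hAt.ne']
          _ ≤ Real.exp (K*r^(n-2)) * (A*(t-1)) :=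
              mul_le_mul_of_nonneg_right hexp (le_of_lt hAt)
          _ = (t-1) * (A*Real.exp (K*r^(n-2))) := by ring
      rw [hform, Real.exp_neg]
      have hrw : (1/A) * (Real.exp (K*r^(n-2)))⁻¹ = 1 / (A * Real.exp (K*r^(n-2))) := by
        rw [one_div, one_div, mul_inv]
      rw [hrw, div_le_div_iff₀ (by positivity) htpos]
      linarith
    · rw [hform, div_le_div_iff₀ htpos hA0]
      nlinarith
  refine ⟨A * Real.exp (-M), A, by positivity, hA0, ?_⟩
  intro n hn
  obtain ⟨m, rfl⟩ : ∃ m, n = m + 1 := ⟨n-1, by omega⟩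
  have hzp : (A:ℝ) ^ (-((m+1 : ℕ) : ℤ)) = (A ^ (m+1))⁻¹ := by
    rw [zpow_neg, zpow_natCast]
  have hsplit : Finset.Icc 1 (m+1) = insert 1 (Finset.Icc 2 (m+1)) := by
    ext k
    simp only [Finset.mem_Icc, Finset.mem_insert]
    omega
  have h1notin : (1:ℕ) ∉ Finset.Icc 2 (m+1) := by simp
  have hprod : ∏ k ∈ Finset.Icc 1 (m+1), ψ k = ∏ k ∈ Finset.Icc 2 (m+1), ψ k := by
    rw [hsplit, Finset.prod_insert h1notin, hψ1, one_mul]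
  have hcard : (Finset.Icc 2 (m+1)).card = m := by rw [Nat.card_Icc]; omega
  have hlow : ∀ k ∈ Finset.Icc 2 (m+1), (1/A) * Real.exp (-(K * r ^ (k-2))) ≤ ψ k :=
    fun k hk => (key k (Finset.mem_Icc.mp hk).1).1
  have hup : ∀ k ∈ Finset.Icc 2 (m+1), ψ k ≤ 1/A :=
    fun k hk => (key k (Finset.mem_Icc.mp hk).1).2
  have hlb_nonneg : ∀ k ∈ Finset.Icc 2 (m+1), 0 ≤ (1/A) * Real.exp (-(K * r^(k-2))) := by
    intro k _
    positivity
  have hU : ∏ k ∈ Finset.Icc 2 (m+1), ψ k ≤ (1/A)^m := by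
    calc ∏ k ∈ Finset.Icc 2 (m+1), ψ k ≤ ∏ _k ∈ Finset.Icc 2 (m+1), (1/A) :=
        Finset.prod_le_prod (fun k hk => le_trans (hlb_nonneg k hk) (hlow k hk)) hup
      _ = (1/A)^m := by rw [Finset.prod_const, hcard]
  have hL : (1/A)^m * Real.exp (-M) ≤ ∏ k ∈ Finset.Icc 2 (m+1), ψ k := by
    have hstep : ∏ k ∈ Finset.Icc 2 (m+1), ((1/A) * Real.exp (-(K * r^(k-2))))
        ≤ ∏ k ∈ Finset.Icc 2 (m+1), ψ k := Finset.prod_le_prod hlb_nonneg hlow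
    have heq : ∏ k ∈ Finset.Icc 2 (m+1), ((1/A)*Real.exp (-(K*r^(k-2))))
        = (1/A)^m * Real.exp (∑ k ∈ Finset.Icc 2 (m+1), -(K*r^(k-2))) := by
      rw [Finset.prod_mul_distrib, Finset.prod_const, hcard, ← Real.exp_sum]
    have hsumle : -M ≤ ∑ k ∈ Finset.Icc 2 (m+1), -(K*r^(k-2)) := by
      have h1 : ∑ k ∈ Finset.Icc 2 (m+1), (K*r^(k-2)) ≤ M := by
        rw [← Finset.mul_sum, hM_def]
        apply mul_le_mul_of_nonneg_left _ hK0
        have hre : ∑ k ∈ Finset.Icc 2 (m+1), r^(k-2) = ∑ i ∈ Finset.range m, r^i := by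
          rw [← Finset.Ico_add_one_right_eq_Icc, Finset.sum_Ico_eq_sum_range]
          simp
        rw [hre, geom_sum_eq (ne_of_lt hr1)]
        have h1r : 0 < 1 - r := by linarith
        have hrm : 0 ≤ r ^ m := pow_nonneg hr0 m
        rw [show (r^m - 1)/(r-1) = (1 - r^m)/(1-r) by
          rw [← neg_div_neg_eq]; ring_nf]
        rw [inv_eq_one_div]
        gcongr
        linarith
      have h2 : ∑ k ∈ Finset.Icc 2 (m+1), -(K*r^(k-2))
          = -∑ k ∈ Finset.Icc 2 (m+1), (K*r^(k-2)) := by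
        rw [Finset.sum_neg_distrib]
      rw [h2]
      linarith
    calc (1/A)^m * Real.exp (-M)
        ≤ (1/A)^m * Real.exp (∑ k ∈ Finset.Icc 2 (m+1), -(K*r^(k-2))) :=
          mul_le_mul_of_nonneg_left (Real.exp_le_exp.mpr hsumle) (by positivity)
      _ = ∏ k ∈ Finset.Icc 2 (m+1), ((1/A)*Real.exp (-(K*r^(k-2)))) := heq.symm
      _ ≤ ∏ k ∈ Finset.Icc 2 (m+1), ψ k := hstep
  have hApow : A * (A^(m+1))⁻¹ = (1/A)^m := by
    rw [pow_succ]
    rw [mul_inv, one_div, inv_pow, mul_comm, mul_assoc, inv_mul_cancel₀ hAne, mul_one]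
  constructor
  · rw [hprod, hzp]
    calc A * Real.exp (-M) * (A^(m+1))⁻¹
        = (1/A)^m * Real.exp (-M) := by rw [mul_right_comm, hApow]
      _ ≤ _ := hL
  · rw [hprod, hzp]
    calc ∏ k ∈ Finset.Icc 2 (m+1), ψ k ≤ (1/A)^m := hU
      _ = A * (A^(m+1))⁻¹ := hApow.symm
end
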